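/- arXiv:math/0410205 — 3 statements merged into one kernel-verified Lean document; each statement's English description precedes it below -/
import Mathlib

section
/- Let G(e) be the Artin group on two generators s,t with relation prod(s,t;m) = prod(t,s;m) where m ≥ 3. Then the center of G(e) is infinite cyclic, generated by z_e = (st)^k where k = m if m is odd and k = m/2 if m is even. -/
/-- The alternating product `prod(s,t;m) = sts⋯` of length `m`. -/
def altProd {G : Type*} [Monoid G] : G → G → ℕ → G
  | _, _, 0 => 1
  | s, t, n + 1 => s * altProd t s n

/-- The Artin relation for an edge with label `m`. -/
def dihedralArtinRels (m : ℕ) : Set (FreeGroup Bool) :=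
  {altProd (FreeGroup.of true) (FreeGroup.of false) m *
    (altProd (FreeGroup.of false) (FreeGroup.of true) m)⁻¹}

/-- The dihedral-type Artin group `G(e) = ⟨s,t | prod(s,t;m) = prod(t,s;m)⟩`. -/
abbrev DihedralArtin (m : ℕ) : Type := PresentedGroup (dihedralArtinRels m)

/-- The generator `s`. -/
def Ds (m : ℕ) : DihedralArtin m := PresentedGroup.of true

/-- The generator `t`. -/
def Dt (m : ℕ) : DihedralArtin m := PresentedGroup.of false

section AltProd
variable {G H : Type*} [Monoid G] [Monoid H]

theorem altProd_map (f : G →* H) (a b : G) : ∀ n, f (altProd a b n) = altProd (f a) (f b) n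
  | 0 => by simp [altProd]
  | n + 1 => by simp [altProd, altProd_map f b a n]

theorem semiconj_pow (a b : G) (n : ℕ) : a * (b * a) ^ n = (a * b) ^ n * a := by
  induction n with
  | zero => simp
  | succ n ih =>
    rw [pow_succ, pow_succ, ← mul_assoc, ← mul_assoc, ih]
    simp [mul_assoc]

theorem altProd_even (a b : G) : ∀ n, altProd a b (2 * n) = (a * b) ^ n
  | 0 => by simp [altProd]
  | n + 1 => by
    have h : 2 * (n + 1) = (2 * n + 1) + 1 := by ring
    rw [h, altProd, show (2*n+1) = 2*n+1 from rfl, altProd, altProd_even a b n]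
    rw [← mul_assoc, pow_succ']

theorem altProd_odd (a b : G) (n : ℕ) : altProd a b (2 * n + 1) = (a * b) ^ n * a := by
  rw [altProd, altProd_even b a n, semiconj_pow]

theorem altProd_self (a : G) : ∀ n, altProd a a n = a ^ n
  | 0 => by simp [altProd]
  | n + 1 => by rw [altProd, altProd_self a n, pow_succ']
end AltProd

section CoprodICenter
open Monoid CoprodI

variable {G : Bool → Type*} [∀ i, Group (G i)] [∀ i, DecidableEq (G i)]

theorem neword_head_ne_one {i j : Bool} (w : CoprodI.NeWord G i j) : w.head ≠ 1 := by
  have h1 : (⟨i, w.head⟩ : Σ i, G i) ∈ w.toList := by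
    have := CoprodI.NeWord.toList_head? w
    exact List.mem_of_mem_head? (by rw [this]; rfl)
  exact w.toWord.ne_one _ h1

theorem neword_inv_length {i j : Bool} (w : CoprodI.NeWord G i j) :
    w.inv.toList.length = w.toList.length := by
  induction w with
  | singleton x hx => rfl
  | append w1 hne w2 ih1 ih2 =>
    show (w2.inv.toList ++ w1.inv.toList).length = (w1.toList ++ w2.toList).length
    simp [ih1, ih2]
    omega

theorem coprodI_center_eq_bot (hnt : ∀ i, ∃ x : G i, x ≠ 1) :
    Subgroup.center (CoprodI G) = ⊥ := by
  rw [eq_bot_iff]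
  intro g hg
  rw [Subgroup.mem_bot]
  by_contra hg1
  have hcomm := Subgroup.mem_center_iff.1 hg
  have hwne : CoprodI.Word.equiv g ≠ CoprodI.Word.empty := by
    intro h
    apply hg1
    have h0 : CoprodI.Word.equiv (1 : CoprodI G) = (1 : CoprodI G) • CoprodI.Word.empty := rfl
    have : CoprodI.Word.equiv g = CoprodI.Word.equiv (1 : CoprodI G) := by
      rw [h, h0, one_smul]
    exact CoprodI.Word.equiv.injective this
  obtain ⟨i, l, w', hw'⟩ := CoprodI.NeWord.of_word (CoprodI.Word.equiv g) hwne
  have hprod : w'.prod = g := by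
    have h1 : CoprodI.Word.equiv.symm (CoprodI.Word.equiv g) = g :=
      CoprodI.Word.equiv.symm_apply_apply g
    rw [← h1, ← hw']
    rfl
  have keyeq : ∀ {a b c d : Bool} (W1 : CoprodI.NeWord G a b) (W2 : CoprodI.NeWord G c d),
      W1.prod = W2.prod → W1.toList.length = W2.toList.length := by
    intro a b c d W1 W2 hW
    have h2 : W1.toWord = W2.toWord := by
      have e1 : CoprodI.Word.equiv.symm W1.toWord = W1.prod := rfl
      have e2 : CoprodI.Word.equiv.symm W2.toWord = W2.prod := rfl
      apply CoprodI.Word.equiv.symm.injective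
      rw [e1, e2, hW]
    have h3 : W1.toList = W2.toList := congrArg CoprodI.Word.toList h2
    rw [h3]
  by_cases hil : i = l
  · subst hil
    obtain ⟨x, hx⟩ := hnt (!i)
    have hne : (!i) ≠ i := Bool.not_ne_self i
    let W : CoprodI.NeWord G (!i) (!i) :=
      (CoprodI.NeWord.singleton x hx).append hne <|
        w'.append (Ne.symm hne) (CoprodI.NeWord.singleton x⁻¹ (inv_ne_one.2 hx))
    have hWprod : W.prod = g := by
      have : W.prod = CoprodI.of x * (w'.prod * CoprodI.of x⁻¹) := by
        simp only [W, CoprodI.NeWord.append_prod, CoprodI.NeWord.prod_singleton]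
      rw [this, hprod, ← mul_assoc, hcomm (CoprodI.of x), mul_assoc]
      simp
    have h1 := keyeq W w' (by rw [hWprod, hprod])
    have h2 : W.toList = [(⟨!i, x⟩ : Σ i, G i)] ++ (w'.toList ++ [⟨!i, x⁻¹⟩]) := rfl
    rw [h2] at h1
    simp at h1
    omega
  · have hx := neword_head_ne_one w'
    let W : CoprodI.NeWord G i i :=
      (w'.append (fun h => hil h.symm) (CoprodI.NeWord.singleton w'.head hx)).append hil w'.inv
    have hWprod : W.prod = (CoprodI.NeWord.singleton w'.head hx).prod := by
      have : W.prod = w'.prod * CoprodI.of w'.head * w'.prod⁻¹ := by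
        simp only [W, CoprodI.NeWord.append_prod, CoprodI.NeWord.prod_singleton,
          CoprodI.NeWord.inv_prod]
      rw [this, hprod, ← hcomm (CoprodI.of w'.head), CoprodI.NeWord.prod_singleton]
      group
    have h1 := keyeq W (CoprodI.NeWord.singleton w'.head hx) hWprod
    have h2 : W.toList = (w'.toList ++ [(⟨i, w'.head⟩ : Σ i, G i)]) ++ w'.inv.toList := rfl
    have h3 : (CoprodI.NeWord.singleton w'.head hx).toList = [(⟨i, w'.head⟩ : Σ i, G i)] := rfl
    rw [h2, h3] at h1
    have h4 := CoprodI.NeWord.toList_ne_nil w'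
    rw [List.length_append, List.length_append, neword_inv_length] at h1
    have h5 : w'.toList.length ≠ 0 := fun h => h4 (List.length_eq_zero_iff.1 h)
    simp at h1
    omega
end CoprodICenter

section ZModHelpers
variable {Q : Type*} [Group Q]

/-- Hom from `Multiplicative (ZMod n)` determined by the image of the generator. -/
def zmodHom (n : ℕ) (g : Q) (hg : g ^ n = 1) : Multiplicative (ZMod n) →* Q :=
  AddMonoidHom.toMultiplicativeLeft <| ZMod.lift n
    ⟨(zmultiplesHom (Additive Q)) (Additive.ofMul g), by
      show ((n : ℤ) • Additive.ofMul g) = 0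
      rw [← ofMul_zpow, zpow_natCast, hg]
      rfl⟩

@[simp] theorem zmodHom_one (n : ℕ) (g : Q) (hg : g ^ n = 1) :
    zmodHom n g hg (Multiplicative.ofAdd 1) = g := by
  have h1 : (Multiplicative.ofAdd (1 : ZMod n)) =
      Multiplicative.ofAdd (((1 : ℤ) : ZMod n)) := by norm_num
  rw [h1]
  show (AddMonoidHom.toMultiplicativeLeft _) _ = g
  rw [AddMonoidHom.coe_toMultiplicativeLeft]
  show Additive.toMul (ZMod.lift n _ (((1 : ℤ) : ZMod n))) = g
  rw [ZMod.lift_coe]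
  show Additive.toMul ((1 : ℤ) • Additive.ofMul g) = g
  simp

theorem zmodHom_ext {n : ℕ} (f1 f2 : Multiplicative (ZMod n) →* Q)
    (h : f1 (Multiplicative.ofAdd 1) = f2 (Multiplicative.ofAdd 1)) : f1 = f2 := by
  refine DFunLike.ext _ _ (fun x => ?_)
  obtain ⟨c, hc⟩ := ZMod.intCast_surjective (n := n) (Multiplicative.toAdd x)
  have hx : x = (Multiplicative.ofAdd (1 : ZMod n)) ^ c := by
    rw [← ofAdd_zsmul]
    rw [show (c : ℤ) • (1 : ZMod n) = ((c : ℤ) : ZMod n) by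
      rw [zsmul_eq_mul]; ring]
    rw [hc]
    rfl
  rw [hx, map_zpow, map_zpow, h]

theorem zmod_exists_ne_one {n : ℕ} (hn : n ≠ 1) :
    ∃ x : Multiplicative (ZMod n), x ≠ 1 := by
  refine ⟨Multiplicative.ofAdd 1, fun h => ?_⟩
  have h2 : (1 : ZMod n) = 0 := by
    have := congrArg Multiplicative.toAdd h
    simpa using this
  match n, hn with
  | 0, _ => exact one_ne_zero h2
  | (k + 2), _ =>
    haveI : Fact (1 < k + 2) := ⟨by omega⟩
    exact one_ne_zero h2
end ZModHelpers

section CenterGlue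
variable {Q H : Type*} [Group Q] [Group H]

theorem center_eq_bot_of_retract (φ : Q →* H) (χ : H →* Q)
    (h1 : ∀ q, χ (φ q) = q) (h2 : ∀ h, φ (χ h) = h)
    (hH : Subgroup.center H = ⊥) : Subgroup.center Q = ⊥ := by
  rw [eq_bot_iff]
  intro q hq
  have hc := Subgroup.mem_center_iff.1 hq
  have hφq : φ q ∈ Subgroup.center H := by
    rw [Subgroup.mem_center_iff]
    intro h
    have : h = φ (χ h) := (h2 h).symm
    rw [this, ← map_mul, ← map_mul, hc]
  rw [hH, Subgroup.mem_bot] at hφq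
  have := congrArg χ hφq
  rw [h1, map_one] at this
  rw [Subgroup.mem_bot, this]

theorem normal_zpowers_of_center {z : Q} (hz : z ∈ Subgroup.center Q) :
    (Subgroup.zpowers z).Normal := by
  constructor
  intro x hx g
  have hxc : x ∈ Subgroup.center Q := by
    obtain ⟨n, rfl⟩ := hx
    exact Subgroup.zpow_mem _ hz n
  have := Subgroup.mem_center_iff.1 hxc g
  rw [show g * x * g⁻¹ = x by rw [this]; group]
  exact hx

theorem center_eq_zpowers_of_quot {z : Q} (hz : z ∈ Subgroup.center Q)
    [hN : (Subgroup.zpowers z).Normal]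
    (hbot : Subgroup.center (Q ⧸ Subgroup.zpowers z) = ⊥) :
    Subgroup.center Q = Subgroup.zpowers z := by
  apply le_antisymm
  · intro g hg
    have hc := Subgroup.mem_center_iff.1 hg
    have h1 : (QuotientGroup.mk' (Subgroup.zpowers z)) g ∈
        Subgroup.center (Q ⧸ Subgroup.zpowers z) := by
      rw [Subgroup.mem_center_iff]
      intro q
      obtain ⟨h, rfl⟩ := QuotientGroup.mk'_surjective (Subgroup.zpowers z) q
      rw [← map_mul, ← map_mul, hc]
    rw [hbot, Subgroup.mem_bot] at h1
    exact (QuotientGroup.eq_one_iff g).1 h1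
  · exact Subgroup.zpowers_le.2 hz
end CenterGlue

section Dihedral

theorem dih_rel (m : ℕ) : altProd (Ds m) (Dt m) m = altProd (Dt m) (Ds m) m := by
  have hmem : (altProd (FreeGroup.of true) (FreeGroup.of false) m *
      (altProd (FreeGroup.of false) (FreeGroup.of true) m)⁻¹) ∈
      Subgroup.normalClosure (dihedralArtinRels m) :=
    Subgroup.subset_normalClosure rfl
  have h1 : PresentedGroup.mk (dihedralArtinRels m)
      (altProd (FreeGroup.of true) (FreeGroup.of false) m *
      (altProd (FreeGroup.of false) (FreeGroup.of true) m)⁻¹) = 1 :=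
    (QuotientGroup.eq_one_iff _).2 hmem
  rw [map_mul, map_inv, altProd_map, altProd_map] at h1
  have h2 := mul_eq_one_iff_eq_inv.1 h1
  rw [inv_inv] at h2
  exact h2

theorem mem_center_of_commute_gens {rels : Set (FreeGroup Bool)} (z : PresentedGroup rels)
    (h : ∀ b : Bool, (PresentedGroup.of (rels := rels) b) * z = z * PresentedGroup.of b) :
    z ∈ Subgroup.center (PresentedGroup rels) := by
  rw [Subgroup.mem_center_iff]
  intro g
  have hg : g ∈ Subgroup.centralizer {z} := by
    apply PresentedGroup.generated_by
    intro b
    rw [Subgroup.mem_centralizer_iff]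
    intro y hy
    rw [Set.mem_singleton_iff] at hy
    subst hy
    exact (h b).symm
  have := Subgroup.mem_centralizer_iff.1 hg z (Set.mem_singleton z)
  exact this.symm
end Dihedral

section EvenCase
variable (c : ℕ)

theorem even_rel : ((Ds (2*c)) * Dt (2*c)) ^ c = (Dt (2*c) * Ds (2*c)) ^ c := by
  have := dih_rel (2*c)
  rwa [altProd_even, altProd_even] at this

theorem even_central : ((Ds (2*c)) * Dt (2*c)) ^ c ∈ Subgroup.center (DihedralArtin (2*c)) := by
  apply mem_center_of_commute_gens
  intro b
  cases b
  · show Dt (2*c) * (Ds (2*c) * Dt (2*c))^c = (Ds (2*c) * Dt (2*c))^c * Dt (2*c)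
    calc Dt (2*c) * (Ds (2*c) * Dt (2*c))^c
        = (Dt (2*c) * Ds (2*c))^c * Dt (2*c) := semiconj_pow _ _ _
      _ = (Ds (2*c) * Dt (2*c))^c * Dt (2*c) := by rw [← even_rel]
  · show Ds (2*c) * (Ds (2*c) * Dt (2*c))^c = (Ds (2*c) * Dt (2*c))^c * Ds (2*c)
    calc Ds (2*c) * (Ds (2*c) * Dt (2*c))^c
        = Ds (2*c) * (Dt (2*c) * Ds (2*c))^c := by rw [even_rel]
      _ = (Ds (2*c) * Dt (2*c))^c * Ds (2*c) := semiconj_pow _ _ _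

open Monoid in
abbrev EvenH (c : ℕ) : Type := Monoid.CoprodI (fun b : Bool => Multiplicative (ZMod (cond b c 0)))

def evenA (c : ℕ) : EvenH c := Monoid.CoprodI.of (i := true) (Multiplicative.ofAdd (1 : ZMod c))
def evenB (c : ℕ) : EvenH c := Monoid.CoprodI.of (i := false) (Multiplicative.ofAdd (1 : ZMod 0))

theorem ofAdd_one_pow (n : ℕ) : (Multiplicative.ofAdd (1 : ZMod n)) ^ n = 1 := by
  have h : (n : ℕ) • (1 : ZMod n) = 0 := by
    rw [nsmul_eq_mul, mul_one, ZMod.natCast_self]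
  rw [← ofAdd_nsmul, h]
  rfl

theorem evenA_pow : evenA c ^ c = 1 := by
  rw [evenA, ← map_pow]
  exact (by rw [ofAdd_one_pow, map_one] :
    Monoid.CoprodI.of (M := fun b : Bool => Multiplicative (ZMod (cond b c 0))) (i := true)
      ((Multiplicative.ofAdd (1 : ZMod c)) ^ c) = 1)

def evenF (c : ℕ) : Bool → EvenH c := fun i => cond i (evenB c) ((evenB c)⁻¹ * evenA c)

theorem even_hrel : ∀ r ∈ dihedralArtinRels (2*c), FreeGroup.lift (evenF c) r = 1 := by
  intro r hr
  rw [dihedralArtinRels, Set.mem_singleton_iff] at hr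
  subst hr
  rw [map_mul, map_inv, altProd_map, altProd_map, altProd_even, altProd_even]
  have hs : FreeGroup.lift (evenF c) (FreeGroup.of true) = evenB c := by
    rw [FreeGroup.lift_apply_of]; rfl
  have ht : FreeGroup.lift (evenF c) (FreeGroup.of false) = (evenB c)⁻¹ * evenA c := by
    rw [FreeGroup.lift_apply_of]; rfl
  rw [hs, ht]
  have h1 : evenB c * ((evenB c)⁻¹ * evenA c) = evenA c := by group
  have h3 : ((evenB c)⁻¹ * evenA c * evenB c) ^ c = 1 := by
    rw [show (evenB c)⁻¹ * evenA c * evenB c = (evenB c)⁻¹ * evenA c * ((evenB c)⁻¹)⁻¹ by group,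
      conj_pow, evenA_pow]
    group
  rw [h1, evenA_pow, h3]
  group

def evenPsi (c : ℕ) : DihedralArtin (2*c) →* EvenH c := PresentedGroup.toGroup (even_hrel c)

theorem evenPsi_s : evenPsi c (Ds (2*c)) = evenB c := PresentedGroup.toGroup.of _
theorem evenPsi_t : evenPsi c (Dt (2*c)) = (evenB c)⁻¹ * evenA c := PresentedGroup.toGroup.of _

theorem evenPsi_z : evenPsi c ((Ds (2*c) * Dt (2*c)) ^ c) = 1 := by
  rw [map_pow, map_mul, evenPsi_s, evenPsi_t, show evenB c * ((evenB c)⁻¹ * evenA c) = evenA c by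
    group, evenA_pow]
theorem even_center (hc : 2 ≤ c) :
    Subgroup.center (DihedralArtin (2*c)) = Subgroup.zpowers ((Ds (2*c) * Dt (2*c)) ^ c) := by
  have hz := even_central c
  haveI hN : (Subgroup.zpowers ((Ds (2*c) * Dt (2*c)) ^ c)).Normal := normal_zpowers_of_center hz
  set π := QuotientGroup.mk' (Subgroup.zpowers ((Ds (2*c) * Dt (2*c)) ^ c)) with hπdef
  have hπz : π ((Ds (2*c) * Dt (2*c)) ^ c) = 1 :=
    (QuotientGroup.eq_one_iff _).2 (Subgroup.mem_zpowers _)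
  have hker : ∀ g ∈ Subgroup.zpowers ((Ds (2*c) * Dt (2*c)) ^ c), evenPsi c g = 1 := by
    rintro g ⟨n, rfl⟩
    rw [map_zpow, evenPsi_z]
    group
  set φ := QuotientGroup.lift (Subgroup.zpowers ((Ds (2*c) * Dt (2*c)) ^ c)) (evenPsi c) hker
    with hφdef
  have hstc : (π (Ds (2*c) * Dt (2*c))) ^ c = 1 := by rw [← map_pow, hπz]
  have hφπ : ∀ g, φ (π g) = evenPsi c g := fun g => rfl
  set χ := Monoid.CoprodI.lift (M := fun b : Bool => Multiplicative (ZMod (cond b c 0)))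
    (fun i => match i with
      | true => zmodHom c (π (Ds (2*c) * Dt (2*c))) hstc
      | false => zmodHom 0 (π (Ds (2*c))) (pow_zero _)) with hχdef
  have hχa : χ (evenA c) = π (Ds (2*c) * Dt (2*c)) := by
    rw [evenA, hχdef, Monoid.CoprodI.lift_of]
    exact zmodHom_one _ _ _
  have hχb : χ (evenB c) = π (Ds (2*c)) := by
    rw [evenB, hχdef, Monoid.CoprodI.lift_of]
    exact zmodHom_one _ _ _
  have hretr1 : ∀ q, χ (φ q) = q := by
    have heq : χ.comp (evenPsi c) = π := by
      apply PresentedGroup.ext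
      intro x
      cases x
      · show χ (evenPsi c (Dt (2*c))) = π (Dt (2*c))
        rw [evenPsi_t, map_mul, map_inv, hχb, hχa, ← map_inv, ← map_mul,
          show (Ds (2*c))⁻¹ * (Ds (2*c) * Dt (2*c)) = Dt (2*c) by group]
      · show χ (evenPsi c (Ds (2*c))) = π (Ds (2*c))
        rw [evenPsi_s, hχb]
    intro q
    obtain ⟨g, rfl⟩ := QuotientGroup.mk'_surjective _ q
    rw [hφπ]
    exact DFunLike.congr_fun heq g
  have hretr2 : ∀ h, φ (χ h) = h := by
    have heq : φ.comp χ = MonoidHom.id _ := by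
      apply Monoid.CoprodI.ext_hom
      intro i
      cases i
      · apply zmodHom_ext
        show φ (χ (evenB c)) = evenB c
        rw [hχb, hφπ, evenPsi_s]
      · apply zmodHom_ext
        show φ (χ (evenA c)) = evenA c
        rw [hχa, hφπ, map_mul, evenPsi_s, evenPsi_t]
        group
    intro h
    exact DFunLike.congr_fun heq h
  have hnt : ∀ i : Bool, ∃ x : Multiplicative (ZMod (cond i c 0)), x ≠ 1 := by
    intro i
    cases i
    · exact zmod_exists_ne_one (by simp)
    · exact zmod_exists_ne_one (by simp; omega)
  have hQbot := center_eq_bot_of_retract φ χ hretr1 hretr2 (coprodI_center_eq_bot hnt)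
  exact center_eq_zpowers_of_quot hz hQbot
end EvenCase

section OddCase
variable (j : ℕ)

theorem odd_rel : (Ds (2*j+1) * Dt (2*j+1))^j * Ds (2*j+1)
    = (Dt (2*j+1) * Ds (2*j+1))^j * Dt (2*j+1) := by
  have := dih_rel (2*j+1)
  rwa [altProd_odd, altProd_odd] at this

theorem odd_D_sq :
    ((Ds (2*j+1) * Dt (2*j+1))^j * Ds (2*j+1)) * ((Ds (2*j+1) * Dt (2*j+1))^j * Ds (2*j+1))
      = (Ds (2*j+1) * Dt (2*j+1)) ^ (2*j+1) := by
  nth_rewrite 2 [odd_rel]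
  calc ((Ds (2*j+1) * Dt (2*j+1))^j * Ds (2*j+1)) * ((Dt (2*j+1) * Ds (2*j+1))^j * Dt (2*j+1))
      = (Ds (2*j+1) * Dt (2*j+1))^j * (Ds (2*j+1) * (Dt (2*j+1) * Ds (2*j+1))^j) * Dt (2*j+1) := by
        group
    _ = (Ds (2*j+1) * Dt (2*j+1))^j * ((Ds (2*j+1) * Dt (2*j+1))^j * Ds (2*j+1)) * Dt (2*j+1) := by
        rw [semiconj_pow]
    _ = (Ds (2*j+1) * Dt (2*j+1)) ^ (2*j+1) := by
        rw [show 2*j+1 = j + j + 1 by omega, pow_add, pow_add, pow_one]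
        group

theorem comm_aux {G : Type*} [Group G] (s t A B : G) (hAB : A = B)
    (h1 : s * B = A * t) (h2 : t * A = B * s) :
    s * (A * A) = (A * A) * s ∧ t * (A * A) = (A * A) * t := by
  constructor
  · calc s * (A * A) = (s * B) * A := by rw [hAB, mul_assoc]
      _ = (A * t) * A := by rw [h1]
      _ = A * (t * A) := by rw [mul_assoc]
      _ = A * (B * s) := by rw [h2]
      _ = (A * A) * s := by rw [hAB, mul_assoc]
  · calc t * (A * A) = (t * A) * A := by rw [mul_assoc]
      _ = (B * s) * A := by rw [h2]
      _ = B * (s * B) := by rw [hAB, mul_assoc]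
      _ = B * (A * t) := by rw [h1]
      _ = (A * A) * t := by rw [hAB, mul_assoc]

theorem odd_central :
    (Ds (2*j+1) * Dt (2*j+1)) ^ (2*j+1) ∈ Subgroup.center (DihedralArtin (2*j+1)) := by
  have h1 : Ds (2*j+1) * ((Dt (2*j+1) * Ds (2*j+1))^j * Dt (2*j+1))
      = ((Ds (2*j+1) * Dt (2*j+1))^j * Ds (2*j+1)) * Dt (2*j+1) := by
    rw [← mul_assoc, semiconj_pow]
  have h2 : Dt (2*j+1) * ((Ds (2*j+1) * Dt (2*j+1))^j * Ds (2*j+1))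
      = ((Dt (2*j+1) * Ds (2*j+1))^j * Dt (2*j+1)) * Ds (2*j+1) := by
    rw [← mul_assoc, semiconj_pow]
  obtain ⟨hcs, hct⟩ := comm_aux (Ds (2*j+1)) (Dt (2*j+1)) _ _ (odd_rel j) h1 h2
  rw [odd_D_sq] at hcs hct
  apply mem_center_of_commute_gens
  intro b
  cases b
  · exact hct
  · exact hcs

abbrev OddH (m : ℕ) : Type := Monoid.CoprodI (fun b : Bool => Multiplicative (ZMod (cond b 2 m)))

def oddX (m : ℕ) : OddH m := Monoid.CoprodI.of (i := true) (Multiplicative.ofAdd (1 : ZMod 2))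
def oddY (m : ℕ) : OddH m := Monoid.CoprodI.of (i := false) (Multiplicative.ofAdd (1 : ZMod m))

theorem oddX_sq (m : ℕ) : oddX m ^ 2 = 1 := by
  rw [oddX, ← map_pow]
  exact (by rw [ofAdd_one_pow, map_one] :
    Monoid.CoprodI.of (M := fun b : Bool => Multiplicative (ZMod (cond b 2 m))) (i := true)
      ((Multiplicative.ofAdd (1 : ZMod 2)) ^ 2) = 1)

theorem oddY_pow (m : ℕ) : oddY m ^ m = 1 := by
  rw [oddY, ← map_pow]
  exact (by rw [ofAdd_one_pow, map_one] :
    Monoid.CoprodI.of (M := fun b : Bool => Multiplicative (ZMod (cond b 2 m))) (i := false)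
      ((Multiplicative.ofAdd (1 : ZMod m)) ^ m) = 1)

def oddF : Bool → OddH (2*j+1) := fun i =>
  cond i ((oddY (2*j+1) ^ j)⁻¹ * oddX (2*j+1)) ((oddX (2*j+1))⁻¹ * oddY (2*j+1) ^ (j+1))

theorem odd_sigma_tau :
    ((oddY (2*j+1) ^ j)⁻¹ * oddX (2*j+1)) * ((oddX (2*j+1))⁻¹ * oddY (2*j+1) ^ (j+1))
      = oddY (2*j+1) := by
  rw [pow_succ]
  group

theorem odd_hrel : ∀ r ∈ dihedralArtinRels (2*j+1), FreeGroup.lift (oddF j) r = 1 := by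
  intro r hr
  rw [dihedralArtinRels, Set.mem_singleton_iff] at hr
  subst hr
  rw [map_mul, map_inv, altProd_map, altProd_map, altProd_odd, altProd_odd]
  have hs : FreeGroup.lift (oddF j) (FreeGroup.of true)
      = (oddY (2*j+1) ^ j)⁻¹ * oddX (2*j+1) := by rw [FreeGroup.lift_apply_of]; rfl
  have ht : FreeGroup.lift (oddF j) (FreeGroup.of false)
      = (oddX (2*j+1))⁻¹ * oddY (2*j+1) ^ (j+1) := by rw [FreeGroup.lift_apply_of]; rfl
  rw [hs, ht, odd_sigma_tau]
  have hfst : oddY (2*j+1) ^ j * ((oddY (2*j+1) ^ j)⁻¹ * oddX (2*j+1)) = oddX (2*j+1) := by group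
  have hts : ((oddX (2*j+1))⁻¹ * oddY (2*j+1) ^ (j+1)) * ((oddY (2*j+1) ^ j)⁻¹ * oddX (2*j+1))
      = (oddX (2*j+1))⁻¹ * oddY (2*j+1) * ((oddX (2*j+1))⁻¹)⁻¹ := by
    rw [pow_succ]
    group
  rw [hfst, hts, conj_pow]
  have hsnd : (oddX (2*j+1))⁻¹ * oddY (2*j+1) ^ j * ((oddX (2*j+1))⁻¹)⁻¹ *
      ((oddX (2*j+1))⁻¹ * oddY (2*j+1) ^ (j+1))
      = (oddX (2*j+1))⁻¹ * oddY (2*j+1) ^ (2*j+1) := by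
    rw [show 2*j+1 = j + (j+1) by omega, pow_add]
    group
  rw [hsnd, oddY_pow]
  have := oddX_sq (2*j+1)
  rw [pow_two] at this
  rw [mul_one, inv_inv]
  exact this

def oddPsi : DihedralArtin (2*j+1) →* OddH (2*j+1) := PresentedGroup.toGroup (odd_hrel j)

theorem oddPsi_s : oddPsi j (Ds (2*j+1)) = (oddY (2*j+1) ^ j)⁻¹ * oddX (2*j+1) :=
  PresentedGroup.toGroup.of _
theorem oddPsi_t : oddPsi j (Dt (2*j+1)) = (oddX (2*j+1))⁻¹ * oddY (2*j+1) ^ (j+1) :=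
  PresentedGroup.toGroup.of _

theorem oddPsi_st : oddPsi j (Ds (2*j+1) * Dt (2*j+1)) = oddY (2*j+1) := by
  rw [map_mul, oddPsi_s, oddPsi_t, odd_sigma_tau]

theorem oddPsi_z : oddPsi j ((Ds (2*j+1) * Dt (2*j+1)) ^ (2*j+1)) = 1 := by
  rw [map_pow, oddPsi_st, oddY_pow]
theorem odd_center (hj : 1 ≤ j) :
    Subgroup.center (DihedralArtin (2*j+1))
      = Subgroup.zpowers ((Ds (2*j+1) * Dt (2*j+1)) ^ (2*j+1)) := by
  have hz := odd_central j
  haveI hN : (Subgroup.zpowers ((Ds (2*j+1) * Dt (2*j+1)) ^ (2*j+1))).Normal :=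
    normal_zpowers_of_center hz
  set π := QuotientGroup.mk' (Subgroup.zpowers ((Ds (2*j+1) * Dt (2*j+1)) ^ (2*j+1))) with hπdef
  have hπz : π ((Ds (2*j+1) * Dt (2*j+1)) ^ (2*j+1)) = 1 :=
    (QuotientGroup.eq_one_iff _).2 (Subgroup.mem_zpowers _)
  have hker : ∀ g ∈ Subgroup.zpowers ((Ds (2*j+1) * Dt (2*j+1)) ^ (2*j+1)), oddPsi j g = 1 := by
    rintro g ⟨n, rfl⟩
    rw [map_zpow, oddPsi_z]
    group
  set φ := QuotientGroup.lift (Subgroup.zpowers ((Ds (2*j+1) * Dt (2*j+1)) ^ (2*j+1)))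
    (oddPsi j) hker with hφdef
  have hφπ : ∀ g, φ (π g) = oddPsi j g := fun g => rfl
  have hA2 : (π ((Ds (2*j+1) * Dt (2*j+1))^j * Ds (2*j+1))) ^ 2 = 1 := by
    rw [pow_two, ← map_mul, odd_D_sq, hπz]
  have hstm : (π (Ds (2*j+1) * Dt (2*j+1))) ^ (2*j+1) = 1 := by
    rw [← map_pow, hπz]
  set χ := Monoid.CoprodI.lift (M := fun b : Bool => Multiplicative (ZMod (cond b 2 (2*j+1))))
    (fun i => match i with
      | true => zmodHom 2 (π ((Ds (2*j+1) * Dt (2*j+1))^j * Ds (2*j+1))) hA2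
      | false => zmodHom (2*j+1) (π (Ds (2*j+1) * Dt (2*j+1))) hstm) with hχdef
  have hχx : χ (oddX (2*j+1)) = π ((Ds (2*j+1) * Dt (2*j+1))^j * Ds (2*j+1)) := by
    rw [oddX, hχdef, Monoid.CoprodI.lift_of]
    exact zmodHom_one _ _ _
  have hχy : χ (oddY (2*j+1)) = π (Ds (2*j+1) * Dt (2*j+1)) := by
    rw [oddY, hχdef, Monoid.CoprodI.lift_of]
    exact zmodHom_one _ _ _
  have hretr1 : ∀ q, χ (φ q) = q := by
    have heq : χ.comp (oddPsi j) = π := by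
      apply PresentedGroup.ext
      intro x
      cases x
      · show χ (oddPsi j (Dt (2*j+1))) = π (Dt (2*j+1))
        rw [oddPsi_t, map_mul, map_inv, map_pow, hχx, hχy, ← map_pow, ← map_inv, ← map_mul,
          show (((Ds (2*j+1) * Dt (2*j+1))^j * Ds (2*j+1)))⁻¹ * (Ds (2*j+1) * Dt (2*j+1))^(j+1)
            = Dt (2*j+1) by rw [pow_succ]; group]
      · show χ (oddPsi j (Ds (2*j+1))) = π (Ds (2*j+1))
        rw [oddPsi_s, map_mul, map_inv, map_pow, hχx, hχy, ← map_pow, ← map_inv, ← map_mul,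
          show (((Ds (2*j+1) * Dt (2*j+1))^j))⁻¹ * ((Ds (2*j+1) * Dt (2*j+1))^j * Ds (2*j+1))
            = Ds (2*j+1) by group]
    intro q
    obtain ⟨g, rfl⟩ := QuotientGroup.mk'_surjective _ q
    rw [hφπ]
    exact DFunLike.congr_fun heq g
  have hretr2 : ∀ h, φ (χ h) = h := by
    have heq : φ.comp χ = MonoidHom.id _ := by
      apply Monoid.CoprodI.ext_hom
      intro i
      cases i
      · apply zmodHom_ext
        show φ (χ (oddY (2*j+1))) = oddY (2*j+1)
        rw [hχy, hφπ, oddPsi_st]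
      · apply zmodHom_ext
        show φ (χ (oddX (2*j+1))) = oddX (2*j+1)
        rw [hχx, hφπ, map_mul, map_pow, oddPsi_st, oddPsi_s]
        group
    intro h
    exact DFunLike.congr_fun heq h
  have hnt : ∀ i : Bool, ∃ x : Multiplicative (ZMod (cond i 2 (2*j+1))), x ≠ 1 := by
    intro i
    cases i
    · exact zmod_exists_ne_one (by simp; omega)
    · exact zmod_exists_ne_one (by simp)
  have hQbot := center_eq_bot_of_retract φ χ hretr1 hretr2 (coprodI_center_eq_bot hnt)
  exact center_eq_zpowers_of_quot hz hQbot
end OddCase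

theorem dih_hrel_len (m : ℕ) : ∀ r ∈ dihedralArtinRels m,
    FreeGroup.lift (fun _ : Bool => Multiplicative.ofAdd (1:ℤ)) r = 1 := by
  intro r hr
  rw [dihedralArtinRels, Set.mem_singleton_iff] at hr
  subst hr
  rw [map_mul, map_inv, altProd_map, altProd_map, FreeGroup.lift_apply_of, FreeGroup.lift_apply_of,
    altProd_self]
  group

theorem dih_not_finorder (m k : ℕ) (hk1 : 1 ≤ k) :
    ¬ IsOfFinOrder ((Ds m * Dt m) ^ k) := by
  intro h
  set ℓ := PresentedGroup.toGroup (dih_hrel_len m) with hℓ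
  have h2 := ℓ.isOfFinOrder h
  have hval : ℓ ((Ds m * Dt m) ^ k)
      = (Multiplicative.ofAdd (1:ℤ) * Multiplicative.ofAdd (1:ℤ)) ^ k := by
    rw [map_pow, map_mul]
    congr 1
  rw [hval] at h2
  rw [isOfFinOrder_iff_pow_eq_one] at h2
  obtain ⟨n, hn, h3⟩ := h2
  have h4 := congrArg Multiplicative.toAdd h3
  simp at h4
  omega


/-- For `m ≥ 3`, the center of `G(e)` is infinite cyclic, generated by
`z_e = (st)^k` with `k = m` if `m` is odd and `k = m/2` if `m` is even. -/
theorem stmt0 (m : ℕ) (hm : 3 ≤ m) (k : ℕ)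
    (hk : k = if m % 2 = 1 then m else m / 2) :
    Subgroup.center (DihedralArtin m) = Subgroup.zpowers ((Ds m * Dt m) ^ k) ∧
      ¬ IsOfFinOrder ((Ds m * Dt m) ^ k) := by
  by_cases hpar : m % 2 = 1
  · obtain ⟨j, rfl⟩ : ∃ j, m = 2*j+1 := ⟨m/2, by omega⟩
    have hkval : k = 2*j+1 := by rw [hk, if_pos hpar]
    rw [hkval]
    exact ⟨odd_center j (by omega), dih_not_finorder _ _ (by omega)⟩
  · obtain ⟨c, rfl⟩ : ∃ c, m = 2*c := ⟨m/2, by omega⟩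
    have hkval : k = c := by rw [hk, if_neg hpar]; omega
    rw [hkval]
    exact ⟨even_center c (by omega), dih_not_finorder _ _ (by omega)⟩
end

section
/- Let Δ be a connected graph and let Σ, Σ′ be minimal circuits in Δ. Then either some vertex of Δ separates Σ from Σ′, or there is a sequence Σ = Σ₀, Σ₁, …, Σₙ = Σ′ of minimal circuits such that Σᵢ and Σᵢ₋₁ share an edge for each i = 1,…,n. -/
open SimpleGraph

/-- A short-circuit of a circuit `C`: a simple path `A` meeting `C` only in its
endpoints `p, q` and strictly shorter than every path from `p` to `q` running
inside `C`. -/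
def IsShortCircuit {V : Type*} (G : SimpleGraph V) {a p q : V}
    (C : G.Walk a a) (A : G.Walk p q) : Prop :=
  A.IsPath ∧ p ≠ q ∧ p ∈ C.support ∧ q ∈ C.support ∧
    (∀ x ∈ A.support, x ∈ C.support → x = p ∨ x = q) ∧
    (∀ D : G.Walk p q, D.edges ⊆ C.edges → A.length < D.length)

/-- A minimal circuit: a simple closed circuit admitting no short-circuit. -/
def IsMinimalCircuit {V : Type*} (G : SimpleGraph V) {a : V} (C : G.Walk a a) : Prop :=
  C.IsCycle ∧ ¬ ∃ (p q : V) (A : G.Walk p q), IsShortCircuit G C A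

namespace Stmt13Aux


variable {V : Type*} {G : SimpleGraph V}

lemma one_le_length_of_ne {u v : V} (W : G.Walk u v) (h : u ≠ v) : 1 ≤ W.length := by
  cases W with
  | nil => exact absurd rfl h
  | cons h' W' => simp [Nat.succ_le_succ, Nat.zero_le]

lemma nil_of_isPath_closed {u : V} (W : G.Walk u u) (h : W.IsPath) : W.length = 0 := by
  cases W with
  | nil => rfl
  | cons h' W' =>
    exfalso
    have hs := h.support_nodup
    rw [SimpleGraph.Walk.support_cons] at hs
    exact (List.nodup_cons.mp hs).1 W'.end_mem_support

lemma exists_edge_of_one_le {u v : V} (W : G.Walk u v) (h : 1 ≤ W.length) :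
    ∃ e, e ∈ W.edges := by
  have : W.edges ≠ [] := by
    intro hnil
    have := W.length_edges
    rw [hnil] at this
    simp at this
    omega
  exact List.exists_mem_of_ne_nil _ this

lemma length_one_edges {u v : V} (W : G.Walk u v) (h : W.length = 1) :
    s(u, v) ∈ W.edges := by
  cases W with
  | nil => simp at h
  | cons hadj W' =>
    cases W' with
    | nil => simp
    | cons h2 W'' => simp [SimpleGraph.Walk.length_cons] at h

/-- An edge joining the two endpoints of a path forces the path to have length one. -/
lemma edge_mem_path_endpoints {u w : V} (R : G.Walk u w) (hR : R.IsPath)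
    (he : s(u, w) ∈ R.edges) : R.length = 1 := by
  cases R with
  | nil => simp at he
  | cons hadj R' =>
    rename_i x
    rw [SimpleGraph.Walk.edges_cons, List.mem_cons] at he
    rcases he with he | he
    · rw [Sym2.eq_iff] at he
      rcases he with ⟨-, hwx⟩ | ⟨hux, -⟩
      · subst hwx
        have : R'.length = 0 := nil_of_isPath_closed R' hR.of_cons
        simp [SimpleGraph.Walk.length_cons, this]
      · exact absurd hux hadj.ne
    · exfalso
      have hu : u ∈ R'.support := R'.fst_mem_support_of_mem_edges he
      have hs := hR.support_nodup
      rw [SimpleGraph.Walk.support_cons] at hs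
      exact (List.nodup_cons.mp hs).1 hu

/-- Glue two paths meeting only at the junction vertex into a path. -/
lemma pathGlue {u w v : V} (P : G.Walk u w) (Q : G.Walk w v)
    (hP : P.IsPath) (hQ : Q.IsPath)
    (hint : ∀ x, x ∈ P.support → x ∈ Q.support → x = w) :
    (P.append Q).IsPath := by
  rw [SimpleGraph.Walk.isPath_def, SimpleGraph.Walk.support_append]
  apply List.Nodup.append hP.support_nodup
  · have := hQ.support_nodup
    rw [Q.support_eq_cons] at this
    exact (List.nodup_cons.mp this).2
  · intro x hxP hxQ
    have hxw : x = w := hint x hxP (List.mem_of_mem_tail hxQ)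
    subst hxw
    have := hQ.support_nodup
    rw [Q.support_eq_cons] at this
    exact (List.nodup_cons.mp this).1 hxQ

/-- Glue two internally disjoint paths into a cycle. -/
lemma cycGlue {u w : V} (R : G.Walk u w) (S : G.Walk w u)
    (hR : R.IsPath) (hS : S.IsPath) (huw : u ≠ w)
    (hint : ∀ x, x ∈ R.support → x ∈ S.support → x = u ∨ x = w)
    (hlen : 3 ≤ R.length + S.length) :
    (R.append S).IsCycle := by
  have hR1 : 1 ≤ R.length := one_le_length_of_ne R huw
  have hS1 : 1 ≤ S.length := one_le_length_of_ne S huw.symm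
  constructor
  constructor
  · -- IsTrail
    rw [SimpleGraph.Walk.isTrail_def, SimpleGraph.Walk.edges_append]
    apply List.Nodup.append hR.edges_nodup hS.edges_nodup
    intro e heR heS
    induction e using Sym2.ind with
    | _ x y =>
      have hx : x ∈ R.support := R.fst_mem_support_of_mem_edges heR
      have hy : y ∈ R.support := R.snd_mem_support_of_mem_edges heR
      have hx' : x ∈ S.support := S.fst_mem_support_of_mem_edges heS
      have hy' : y ∈ S.support := S.snd_mem_support_of_mem_edges heS
      have hxy : x ≠ y := (R.adj_of_mem_edges heR).ne
      rcases hint x hx hx' with rfl | rfl <;> rcases hint y hy hy' with rfl | rfl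
      · exact hxy rfl
      · -- e = s(u, w)
        have h1 : R.length = 1 := edge_mem_path_endpoints R hR heR
        have h2 : S.length = 1 := by
          apply edge_mem_path_endpoints S hS
          rwa [Sym2.eq_swap]
        omega
      · have h1 : R.length = 1 := by
          apply edge_mem_path_endpoints R hR
          rwa [Sym2.eq_swap]
        have h2 : S.length = 1 := edge_mem_path_endpoints S hS heS
        omega
      · exact hxy rfl
  · -- not nil
    intro hnil
    have := congrArg SimpleGraph.Walk.length hnil
    rw [SimpleGraph.Walk.length_append] at this
    simp only [SimpleGraph.Walk.length_nil] at this
    omega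
  · -- support tail nodup
    have hsupp : (R.append S).support = R.support ++ S.support.tail :=
      SimpleGraph.Walk.support_append R S
    have hRsupp := R.support_eq_cons
    rw [hsupp, hRsupp, List.cons_append, List.tail_cons]
    have hnR : R.support.tail.Nodup := by
      have := hR.support_nodup
      rw [hRsupp] at this
      exact (List.nodup_cons.mp this).2
    have hnS : S.support.tail.Nodup := by
      have := hS.support_nodup
      rw [S.support_eq_cons] at this
      exact (List.nodup_cons.mp this).2
    apply List.Nodup.append hnR hnS
    intro x hxR hxS
    have hx1 : x ∈ R.support := List.mem_of_mem_tail hxR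
    have hx2 : x ∈ S.support := List.mem_of_mem_tail hxS
    rcases hint x hx1 hx2 with rfl | rfl
    · have := hR.support_nodup
      rw [hRsupp] at this
      exact (List.nodup_cons.mp this).1 hxR
    · have := hS.support_nodup
      rw [S.support_eq_cons] at this
      exact (List.nodup_cons.mp this).1 hxS


section DecEq
variable [DecidableEq V]

lemma mem_support_rotate {c u : V} (D : G.Walk c c) (h : u ∈ D.support) (x : V) :
    x ∈ (D.rotate u h).support ↔ x ∈ D.support := by
  simp only [SimpleGraph.Walk.rotate]
  rw [SimpleGraph.Walk.mem_support_append_iff]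
  conv_rhs => rw [← SimpleGraph.Walk.take_spec D h]
  rw [SimpleGraph.Walk.mem_support_append_iff]
  exact or_comm

lemma mem_edges_rotate {c u : V} (D : G.Walk c c) (h : u ∈ D.support) (e : Sym2 V) :
    e ∈ (D.rotate u h).edges ↔ e ∈ D.edges :=
  (D.rotate_edges u h).perm.mem_iff

/-- Splitting a cycle at two of its vertices into two internally disjoint arcs. -/
lemma cycle_arcs {c : V} (D : G.Walk c c) (hD : D.IsCycle) {p q : V}
    (hp : p ∈ D.support) (hq : q ∈ D.support) (hpq : p ≠ q) :
    ∃ (α β : G.Walk p q), α.IsPath ∧ β.IsPath ∧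
      (∀ e ∈ α.edges, e ∈ D.edges) ∧ (∀ e ∈ β.edges, e ∈ D.edges) ∧
      (∀ x ∈ α.support, x ∈ D.support) ∧ (∀ x ∈ β.support, x ∈ D.support) ∧
      (∀ x, x ∈ α.support → x ∈ β.support → x = p ∨ x = q) ∧
      (∀ x ∈ D.support, x ∈ α.support ∨ x ∈ β.support) ∧
      1 ≤ α.length ∧ 1 ≤ β.length ∧
      (∀ e ∈ D.edges, e ∈ α.edges ∨ e ∈ β.edges) ∧
      α.length + β.length = D.length := by
  classical
  set D' := D.rotate p hp with hD'def
  have hD' : D'.IsCycle := hD.rotate hp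
  have hq' : q ∈ D'.support := (mem_support_rotate D hp q).mpr hq
  set α := D'.takeUntil q hq' with hαdef
  set γ := D'.dropUntil q hq' with hγdef
  have hspec : α.append γ = D' := D'.take_spec hq'
  have hsupp : α.support ++ γ.support.tail = D'.support := by
    rw [← SimpleGraph.Walk.support_append, hspec]
  have hα_cons : α.support = p :: α.support.tail := α.support_eq_cons
  have hγ_cons : γ.support = q :: γ.support.tail := γ.support_eq_cons
  set U' := α.support.tail
  set W' := γ.support.tail
  have hD'_cons : D'.support = p :: D'.support.tail := D'.support_eq_cons
  have hT : U' ++ W' = D'.support.tail := by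
    have h2 := hsupp
    rw [hα_cons, hD'_cons] at h2
    have := congrArg List.tail h2
    simpa using this
  have hTnodup : (D'.support.tail).Nodup := hD'.support_nodup
  have hUW : (U' ++ W').Nodup := hT ▸ hTnodup
  have hU'nodup : U'.Nodup := hUW.of_append_left
  have hW'nodup : W'.Nodup := hUW.of_append_right
  have hdisj : ∀ x ∈ U', x ∉ W' := fun x hx hx' =>
    (List.disjoint_of_nodup_append hUW) hx hx'
  have hqU' : q ∈ U' := by
    have : q ∈ α.support := α.end_mem_support
    rw [hα_cons, List.mem_cons] at this
    rcases this with h | h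
    · exact absurd h.symm hpq
    · exact h
  have hpW' : p ∈ W' := by
    have : p ∈ γ.support := γ.end_mem_support
    rw [hγ_cons, List.mem_cons] at this
    rcases this with h | h
    · exact absurd h hpq
    · exact h
  have hαpath : α.IsPath := by
    rw [SimpleGraph.Walk.isPath_def, hα_cons]
    exact List.nodup_cons.mpr ⟨fun h => hdisj p h hpW', hU'nodup⟩
  have hγpath : γ.IsPath := by
    rw [SimpleGraph.Walk.isPath_def, hγ_cons]
    refine List.nodup_cons.mpr ⟨fun h => hdisj q hqU' h, hW'nodup⟩
  have hmemα : ∀ x ∈ α.support, x = p ∨ x ∈ U' := by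
    intro x hx; rw [hα_cons, List.mem_cons] at hx; exact hx
  have hmemγ : ∀ x ∈ γ.support, x = q ∨ x ∈ W' := by
    intro x hx; rw [hγ_cons, List.mem_cons] at hx; exact hx
  have hespec : ∀ e ∈ D.edges, e ∈ α.edges ∨ e ∈ γ.edges := by
    intro e he
    have he' : e ∈ D'.edges := (mem_edges_rotate D hp e).mpr he
    rw [← hspec, SimpleGraph.Walk.edges_append, List.mem_append] at he'
    exact he'
  have hlenspec : α.length + γ.length = D.length := by
    have h1 := congrArg SimpleGraph.Walk.length hspec
    rw [SimpleGraph.Walk.length_append] at h1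
    have h2 : D'.length = D.length := by
      simp only [hD'def, SimpleGraph.Walk.rotate]
      rw [SimpleGraph.Walk.length_append]
      have h3 := congrArg SimpleGraph.Walk.length (D.take_spec hp)
      rw [SimpleGraph.Walk.length_append] at h3
      omega
    omega
  refine ⟨α, γ.reverse, hαpath, hγpath.reverse, ?_, ?_, ?_, ?_, ?_, ?_, ?_, ?_, ?_, ?_⟩
  · intro e he
    exact (mem_edges_rotate D hp e).mp (D'.edges_takeUntil_subset hq' he)
  · intro e he
    rw [SimpleGraph.Walk.edges_reverse, List.mem_reverse] at he
    exact (mem_edges_rotate D hp e).mp (D'.edges_dropUntil_subset hq' he)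
  · intro x hx
    exact (mem_support_rotate D hp x).mp (D'.support_takeUntil_subset hq' hx)
  · intro x hx
    rw [SimpleGraph.Walk.support_reverse, List.mem_reverse] at hx
    exact (mem_support_rotate D hp x).mp (D'.support_dropUntil_subset hq' hx)
  · intro x hxα hxβ
    rw [SimpleGraph.Walk.support_reverse, List.mem_reverse] at hxβ
    rcases hmemα x hxα with rfl | hxU
    · exact Or.inl rfl
    · rcases hmemγ x hxβ with rfl | hxW
      · exact Or.inr rfl
      · exact absurd hxW (hdisj x hxU)
  · intro x hx
    have hx' : x ∈ D'.support := (mem_support_rotate D hp x).mpr hx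
    rw [hD'_cons, List.mem_cons] at hx'
    rcases hx' with rfl | hx'
    · exact Or.inl α.start_mem_support
    · rw [← hT, List.mem_append] at hx'
      rcases hx' with h | h
      · left; rw [hα_cons]; exact List.mem_cons_of_mem _ h
      · right
        rw [SimpleGraph.Walk.support_reverse, List.mem_reverse, hγ_cons]
        exact List.mem_cons_of_mem _ h
  · exact one_le_length_of_ne α hpq
  · rw [SimpleGraph.Walk.length_reverse]
    exact one_le_length_of_ne γ (Ne.symm hpq)
  · intro e he
    rcases hespec e he with h | h
    · exact Or.inl h
    · right; rw [SimpleGraph.Walk.edges_reverse, List.mem_reverse]; exact h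
  · rw [SimpleGraph.Walk.length_reverse]; exact hlenspec


/-- One step: two edges lying on a common minimal circuit. -/
def ChainStep (G : SimpleGraph V) (e f : Sym2 V) : Prop :=
  ∃ (v : V) (Δ : G.Walk v v), IsMinimalCircuit G Δ ∧ e ∈ Δ.edges ∧ f ∈ Δ.edges

/-- Two edges joined by a chain of minimal circuits, consecutive ones sharing an edge. -/
def EdgeChain (G : SimpleGraph V) : Sym2 V → Sym2 V → Prop :=
  Relation.ReflTransGen (ChainStep G)

lemma chain_in_cycle (n : ℕ) : ∀ {c : V} (D : G.Walk c c), D.length ≤ n → D.IsCycle →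
    ∀ e ∈ D.edges, ∀ f ∈ D.edges, EdgeChain G e f := by
  induction n with
  | zero =>
    intro c D hlen hD e _ f _
    have := hD.three_le_length
    omega
  | succ n ih =>
    intro c D hlen hD e he f hf
    classical
    by_cases hmin : IsMinimalCircuit G D
    · exact Relation.ReflTransGen.single ⟨c, D, hmin, he, hf⟩
    · have hsc : ∃ (p q : V) (A : G.Walk p q), IsShortCircuit G D A := by
        by_contra hno
        exact hmin ⟨hD, hno⟩
      obtain ⟨p, q, A, hApath, hpq, hpD, hqD, hAint, hAshort⟩ := hsc
      obtain ⟨α, β, hαp, hβp, hαe, hβe, hαs, hβs, hαβ, hcover, hα1, hβ1, hecover, hlensum⟩ :=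
        cycle_arcs D hD hpD hqD hpq
      have hAα : A.length < α.length := hAshort α (fun e' he' => hαe e' he')
      have hAβ : A.length < β.length := hAshort β (fun e' he' => hβe e' he')
      have hA1 : 1 ≤ A.length := one_le_length_of_ne A hpq
      -- the two smaller cycles
      have hD₁ : (A.append β.reverse).IsCycle := by
        apply cycGlue A β.reverse hApath hβp.reverse hpq
        · intro x hx hx'
          rw [SimpleGraph.Walk.support_reverse, List.mem_reverse] at hx'
          exact hAint x hx (hβs x hx')
        · rw [SimpleGraph.Walk.length_reverse]; omega
      have hD₂ : (α.append A.reverse).IsCycle := by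
        apply cycGlue α A.reverse hαp hApath.reverse hpq
        · intro x hx hx'
          rw [SimpleGraph.Walk.support_reverse, List.mem_reverse] at hx'
          exact hAint x hx' (hαs x hx)
        · rw [SimpleGraph.Walk.length_reverse]; omega
      obtain ⟨g, hg⟩ := exists_edge_of_one_le A hA1
      have hgD₁ : g ∈ (A.append β.reverse).edges := by
        rw [SimpleGraph.Walk.edges_append, List.mem_append]; exact Or.inl hg
      have hgD₂ : g ∈ (α.append A.reverse).edges := by
        rw [SimpleGraph.Walk.edges_append, List.mem_append,
          SimpleGraph.Walk.edges_reverse, List.mem_reverse]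
        exact Or.inr hg
      have hlen₁ : (A.append β.reverse).length ≤ n := by
        rw [SimpleGraph.Walk.length_append, SimpleGraph.Walk.length_reverse]
        omega
      have hlen₂ : (α.append A.reverse).length ≤ n := by
        rw [SimpleGraph.Walk.length_append, SimpleGraph.Walk.length_reverse]
        omega
      have hchain : ∀ e' ∈ D.edges, EdgeChain G e' g := by
        intro e' he'
        rcases hecover e' he' with h | h
        · -- e' on α, use D₂
          refine ih (α.append A.reverse) hlen₂ hD₂ e' ?_ g hgD₂
          rw [SimpleGraph.Walk.edges_append, List.mem_append]; exact Or.inl h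
        · refine ih (A.append β.reverse) hlen₁ hD₁ e' ?_ g hgD₁
          rw [SimpleGraph.Walk.edges_append, List.mem_append,
            SimpleGraph.Walk.edges_reverse, List.mem_reverse]
          exact Or.inr h
      have h1 : EdgeChain G e g := hchain e he
      have h2 : EdgeChain G g f := by
        rcases hecover f hf with h | h
        · refine ih (α.append A.reverse) hlen₂ hD₂ g hgD₂ f ?_
          rw [SimpleGraph.Walk.edges_append, List.mem_append]; exact Or.inl h
        · refine ih (A.append β.reverse) hlen₁ hD₁ g hgD₁ f ?_
          rw [SimpleGraph.Walk.edges_append, List.mem_append,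
            SimpleGraph.Walk.edges_reverse, List.mem_reverse]
          exact Or.inr h
      exact h1.trans h2

lemma cross_cycle (n : ℕ) : ∀ {p q : V} (α β : G.Walk p q),
    α.length + β.length ≤ n → p ≠ q → α.IsPath → β.IsPath →
    (∀ e ∈ α.edges, e ∉ β.edges) →
    ∃ (c : V) (E : G.Walk c c), E.IsCycle ∧
      (∃ g ∈ E.edges, g ∈ α.edges) ∧ (∃ h ∈ E.edges, h ∈ β.edges) := by
  induction n with
  | zero =>
    intro p q α β hlen hpq _ _ _
    have := one_le_length_of_ne α hpq
    omega
  | succ n ih =>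
    intro p q α β hlen hpq hαp hβp hdisj
    classical
    by_cases hint : ∀ x, x ∈ α.support → x ∈ β.support → x = p ∨ x = q
    · have hα1 : 1 ≤ α.length := one_le_length_of_ne α hpq
      have hβ1 : 1 ≤ β.length := one_le_length_of_ne β hpq
      have hsum : 3 ≤ α.length + β.length := by
        by_contra hno
        have hα_eq : α.length = 1 := by omega
        have hβ_eq : β.length = 1 := by omega
        exact hdisj _ (length_one_edges α hα_eq) (length_one_edges β hβ_eq)
      have hE : (α.append β.reverse).IsCycle := by
        apply cycGlue α β.reverse hαp hβp.reverse hpq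
        · intro x hx hx'
          rw [SimpleGraph.Walk.support_reverse, List.mem_reverse] at hx'
          exact hint x hx hx'
        · rw [SimpleGraph.Walk.length_reverse]; omega
      obtain ⟨g, hg⟩ := exists_edge_of_one_le α hα1
      obtain ⟨h, hh⟩ := exists_edge_of_one_le β hβ1
      refine ⟨p, α.append β.reverse, hE, ⟨g, ?_, hg⟩, ⟨h, ?_, hh⟩⟩
      · rw [SimpleGraph.Walk.edges_append, List.mem_append]; exact Or.inl hg
      · rw [SimpleGraph.Walk.edges_append, List.mem_append,
          SimpleGraph.Walk.edges_reverse, List.mem_reverse]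
        exact Or.inr hh
    · push_neg at hint
      obtain ⟨r, hrα, hrβ, hrpq⟩ := hint
      obtain ⟨hrp, hrq⟩ := hrpq
      have hlenα : (α.takeUntil r hrα).length < α.length := by
        have hspec := congrArg SimpleGraph.Walk.length (α.take_spec hrα)
        rw [SimpleGraph.Walk.length_append] at hspec
        have := one_le_length_of_ne (α.dropUntil r hrα) hrq
        omega
      have hlenβ : (β.takeUntil r hrβ).length < β.length := by
        have hspec := congrArg SimpleGraph.Walk.length (β.take_spec hrβ)
        rw [SimpleGraph.Walk.length_append] at hspec
        have := one_le_length_of_ne (β.dropUntil r hrβ) hrq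
        omega
      obtain ⟨c, E, hE, ⟨g, hgE, hgα⟩, ⟨h, hhE, hhβ⟩⟩ :=
        ih (α.takeUntil r hrα) (β.takeUntil r hrβ) (by omega) (Ne.symm hrp)
          (hαp.takeUntil hrα) (hβp.takeUntil hrβ)
          (fun e he₁ he₂ => hdisj e (α.edges_takeUntil_subset hrα he₁)
            (β.edges_takeUntil_subset hrβ he₂))
      exact ⟨c, E, hE, ⟨g, hgE, α.edges_takeUntil_subset hrα hgα⟩,
        ⟨h, hhE, β.edges_takeUntil_subset hrβ hhβ⟩⟩

lemma chain_two_cycles {c c' : V} (D : G.Walk c c) (D' : G.Walk c' c')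
    (hD : D.IsCycle) (hD' : D'.IsCycle) {p q : V}
    (hpD : p ∈ D.support) (hpD' : p ∈ D'.support)
    (hqD : q ∈ D.support) (hqD' : q ∈ D'.support) (hpq : p ≠ q) :
    ∀ e ∈ D.edges, ∀ f ∈ D'.edges, EdgeChain G e f := by
  classical
  intro e he f hf
  by_cases hshare : ∃ g, g ∈ D.edges ∧ g ∈ D'.edges
  · obtain ⟨g, hg1, hg2⟩ := hshare
    exact (chain_in_cycle D.length D le_rfl hD e he g hg1).trans
      (chain_in_cycle D'.length D' le_rfl hD' g hg2 f hf)
  · obtain ⟨α, -, hαp, -, hαe, -, -, -, -, -, -, -, -, -⟩ :=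
      cycle_arcs D hD hpD hqD hpq
    obtain ⟨α', -, hα'p, -, hα'e, -, -, -, -, -, -, -, -, -⟩ :=
      cycle_arcs D' hD' hpD' hqD' hpq
    obtain ⟨cE, E, hE, ⟨g, hgE, hgα⟩, ⟨h, hhE, hhα'⟩⟩ :=
      cross_cycle (α.length + α'.length) α α' le_rfl hpq hαp hα'p
        (fun e' he₁ he₂ => hshare ⟨e', hαe e' he₁, hα'e e' he₂⟩)
    exact ((chain_in_cycle D.length D le_rfl hD e he g (hαe g hgα)).trans
      (chain_in_cycle E.length E le_rfl hE g hgE h hhE)).trans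
      (chain_in_cycle D'.length D' le_rfl hD' h (hα'e h hhα') f hf)

end DecEq


section Menger
variable [DecidableEq V]

/-- A path from `A` to `B` meeting `A` only at its start and `B` only at its end. -/
def Trimmed (A B : Set V) {p p' : V} (P : G.Walk p p') : Prop :=
  P.IsPath ∧ p ∈ A ∧ p' ∈ B ∧ (∀ u ∈ P.support, u ∈ A → u = p) ∧
    (∀ u ∈ P.support, u ∈ B → u = p')

lemma trim_first {x y : V} (W : G.Walk x y) (B : Set V) (hy : y ∈ B) :
    ∃ (z : V) (W' : G.Walk x z), z ∈ B ∧ (∀ u ∈ W'.support, u ∈ W.support) ∧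
      (∀ u ∈ W'.support, u ∈ B → u = z) ∧ W'.length ≤ W.length := by
  classical
  induction W with
  | nil =>
    exact ⟨_, .nil, hy, fun u hu => hu, fun u hu _ => by simpa using hu, le_rfl⟩
  | cons h p ih =>
    rename_i u v w
    by_cases hu : u ∈ B
    · refine ⟨u, .nil, hu, fun z hz => ?_, fun z hz _ => by simpa using hz, by simp⟩
      simp only [SimpleGraph.Walk.support_nil, List.mem_singleton] at hz
      subst hz; exact SimpleGraph.Walk.start_mem_support _
    · obtain ⟨z, W', hz, hs, hB, hl⟩ := ih hy
      refine ⟨z, .cons h W', hz, ?_, ?_, by simpa using Nat.succ_le_succ hl⟩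
      · intro t ht
        rw [SimpleGraph.Walk.support_cons, List.mem_cons] at ht ⊢
        rcases ht with rfl | ht
        · exact Or.inl rfl
        · exact Or.inr (hs t ht)
      · intro t ht htB
        rw [SimpleGraph.Walk.support_cons, List.mem_cons] at ht
        rcases ht with rfl | ht
        · exact absurd htB hu
        · exact hB t ht htB

lemma trim {x y : V} (W : G.Walk x y) (A B : Set V) (hx : x ∈ A) (hy : y ∈ B) :
    ∃ (p p' : V) (P : G.Walk p p'), Trimmed A B P ∧
      (∀ u ∈ P.support, u ∈ W.support) ∧ P.length ≤ W.length := by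
  obtain ⟨b, W₁, hb, hW₁s, hW₁B, hW₁l⟩ := trim_first W B hy
  have hx' : x ∈ A := hx
  obtain ⟨a₀, W₂, ha₀, hW₂s, hW₂A, hW₂l⟩ := trim_first W₁.reverse A (by simpa using hx')
  have hsub : ∀ u ∈ W₂.reverse.bypass.support, u ∈ W₁.support := by
    intro u hu
    have h1 := SimpleGraph.Walk.support_bypass_subset _ hu
    rw [SimpleGraph.Walk.support_reverse, List.mem_reverse] at h1
    have h2 := hW₂s u h1
    rwa [SimpleGraph.Walk.support_reverse, List.mem_reverse] at h2
  refine ⟨a₀, b, W₂.reverse.bypass, ⟨SimpleGraph.Walk.bypass_isPath _, ha₀, hb, ?_, ?_⟩,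
    ?_, ?_⟩
  · intro u hu huA
    apply hW₂A u _ huA
    have h1 := SimpleGraph.Walk.support_bypass_subset _ hu
    rwa [SimpleGraph.Walk.support_reverse, List.mem_reverse] at h1
  · intro u hu huB
    exact hW₁B u (hsub u hu) huB
  · intro u hu
    exact hW₁s u (hsub u hu)
  · calc W₂.reverse.bypass.length ≤ W₂.reverse.length :=
          SimpleGraph.Walk.length_bypass_le _
    _ = W₂.length := SimpleGraph.Walk.length_reverse _
    _ ≤ W₁.reverse.length := hW₂l
    _ = W₁.length := SimpleGraph.Walk.length_reverse _
    _ ≤ W.length := hW₁l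

lemma first_hit {x y : V} (W : G.Walk x y) (Pred : V → Prop)
    (h : ∃ w ∈ W.support, Pred w) :
    ∃ (w : V) (W₁ : G.Walk x w), Pred w ∧ (∀ z ∈ W₁.support, z ∈ W.support) ∧
      (∀ z ∈ W₁.support, z ≠ w → ¬ Pred z) := by
  classical
  induction W with
  | nil =>
    obtain ⟨w, hw, hPw⟩ := h
    simp only [SimpleGraph.Walk.support_nil, List.mem_singleton] at hw
    subst hw
    exact ⟨w, .nil, hPw, fun z hz => hz, fun z hz hne => by simp at hz; exact absurd hz hne⟩
  | cons hadj p ih =>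
    rename_i u v w
    by_cases hu : Pred u
    · refine ⟨u, .nil, hu, fun z hz => ?_, fun z hz hne => ?_⟩
      · simp only [SimpleGraph.Walk.support_nil, List.mem_singleton] at hz
        subst hz; exact SimpleGraph.Walk.start_mem_support _
      · simp only [SimpleGraph.Walk.support_nil, List.mem_singleton] at hz
        exact absurd hz hne
    · obtain ⟨w', hw', hPw'⟩ := h
      rw [SimpleGraph.Walk.support_cons, List.mem_cons] at hw'
      rcases hw' with rfl | hw'
      · exact absurd hPw' hu
      · obtain ⟨w₀, W₁, hP₀, hs, hfirst⟩ := ih ⟨w', hw', hPw'⟩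
        refine ⟨w₀, .cons hadj W₁, hP₀, ?_, ?_⟩
        · intro z hz
          rw [SimpleGraph.Walk.support_cons, List.mem_cons] at hz ⊢
          rcases hz with rfl | hz
          · exact Or.inl rfl
          · exact Or.inr (hs z hz)
        · intro z hz hne
          rw [SimpleGraph.Walk.support_cons, List.mem_cons] at hz
          rcases hz with rfl | hz
          · exact hu
          · exact hfirst z hz hne

lemma start_not_mem_dropUntil {p b w : V} (T : G.Walk p b) (hT : T.IsPath)
    (hw : w ∈ T.support) (hwp : w ≠ p) : p ∉ (T.dropUntil w hw).support := by
  intro hp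
  have hsupp : (T.takeUntil w hw).support ++ (T.dropUntil w hw).support.tail = T.support := by
    rw [← SimpleGraph.Walk.support_append, T.take_spec hw]
  have hnd := hT.support_nodup
  rw [← hsupp] at hnd
  have hdisj := List.disjoint_of_nodup_append hnd
  have hp1 : p ∈ (T.takeUntil w hw).support := SimpleGraph.Walk.start_mem_support _
  have hp2 : p ∈ (T.dropUntil w hw).support.tail := by
    have := (T.dropUntil w hw).support_eq_cons
    rw [this, List.mem_cons] at hp
    rcases hp with rfl | hp
    · exact absurd rfl hwp
    · rw [this, List.tail_cons]; exact hp
  exact hdisj hp1 hp2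

lemma menger2_step (A B : Set V)
    (hnosep : ∀ v : V, ∃ x ∈ A, ∃ y ∈ B, ∃ W : G.Walk x y, v ∉ W.support)
    {p a₁ b₁ p₂ b₂ : V} (hpA : p ∈ A) (hpB : p ∉ B) (hadj : G.Adj p a₁) (ha₁A : a₁ ∉ A)
    (T₁ : G.Walk a₁ b₁) (T₂ : G.Walk p₂ b₂)
    (hT₁trim : Trimmed (insert a₁ A) B T₁) (hT₂trim : Trimmed (insert a₁ A) B T₂)
    (hdisj : ∀ x ∈ T₁.support, x ∉ T₂.support) :
    ∃ (p p' q q' : V) (P : G.Walk p p') (Q : G.Walk q q'),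
      Trimmed A B P ∧ Trimmed A B Q ∧ ∀ x ∈ P.support, x ∉ Q.support := by
  classical
  obtain ⟨hT₁path, -, hb₁, hT₁A, hT₁B⟩ := hT₁trim
  obtain ⟨hT₂path, hp₂, hb₂, hT₂A, hT₂B⟩ := hT₂trim
  have hpa₁ : p ≠ a₁ := hadj.ne
  have hpT₁ : p ∉ T₁.support := fun h => hpa₁ (hT₁A p h (Set.mem_insert_of_mem _ hpA))
  have hT₁A' : ∀ u ∈ T₁.support, u ∉ A := by
    intro u hu huA
    have := hT₁A u hu (Set.mem_insert_of_mem _ huA)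
    subst this
    exact ha₁A huA
  have hTtrim : Trimmed A B (SimpleGraph.Walk.cons hadj T₁) := by
    refine ⟨hT₁path.cons hpT₁, hpA, hb₁, ?_, ?_⟩
    · intro u hu huA
      rw [SimpleGraph.Walk.support_cons, List.mem_cons] at hu
      rcases hu with rfl | hu
      · rfl
      · exact absurd huA (hT₁A' u hu)
    · intro u hu huB
      rw [SimpleGraph.Walk.support_cons, List.mem_cons] at hu
      rcases hu with rfl | hu
      · exact absurd huB hpB
      · exact hT₁B u hu huB
  by_cases hpT₂ : p ∈ T₂.support
  · -- p is the start of T₂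
    have hpp₂ : p = p₂ := hT₂A p hpT₂ (Set.mem_insert_of_mem _ hpA)
    subst hpp₂
    have hT₂trim' : Trimmed A B T₂ := by
      refine ⟨hT₂path, hpA, hb₂, ?_, hT₂B⟩
      intro u hu huA
      exact hT₂A u hu (Set.mem_insert_of_mem _ huA)
    obtain ⟨r, hrA, r', hr'B, W, hWp⟩ := hnosep p
    obtain ⟨r₀, r₁, R, ⟨hRpath, hr₀A, hr₁B, hRA, hRB⟩, hRs, -⟩ := trim W A B hrA hr'B
    have hpR : p ∉ R.support := fun h => hWp (hRs p h)
    by_cases hhit : ∃ w ∈ R.support, w ∈ T₁.support ∨ w ∈ T₂.support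
    · obtain ⟨w, R₁, hwPred, hR₁s, hR₁first⟩ := first_hit R _ hhit
      have hpR₁ : p ∉ R₁.support := fun h => hpR (hR₁s p h)
      rcases hwPred with hwT₁ | hwT₂
      · -- go along T₁ after w ; result avoids T₂
        set S := R₁.append (T₁.dropUntil w hwT₁) with hSdef
        have hSavoid : ∀ x ∈ S.support, x ∉ T₂.support := by
          intro x hx
          rw [hSdef, SimpleGraph.Walk.mem_support_append_iff] at hx
          rcases hx with hx | hx
          · by_cases hxw : x = w
            · subst hxw; exact hdisj x hwT₁
            · intro hx2
              exact hR₁first x hx hxw (Or.inr hx2)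
          · exact hdisj x (SimpleGraph.Walk.support_dropUntil_subset _ _ hx)
        obtain ⟨s₀, s₁, S', hS'trim, hS's, -⟩ := trim S A B hr₀A hb₁
        exact ⟨s₀, s₁, _, _, S', T₂, hS'trim, hT₂trim',
          fun x hx => hSavoid x (hS's x hx)⟩
      · -- go along T₂ after w ; result avoids cons hadj T₁
        set S := R₁.append (T₂.dropUntil w hwT₂) with hSdef
        have hwp : w ≠ p := fun h => hpR₁ (h ▸ R₁.end_mem_support)
        have hSavoidT : ∀ x ∈ S.support, x ∉ (SimpleGraph.Walk.cons hadj T₁).support := by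
          intro x hx hx'
          rw [SimpleGraph.Walk.support_cons, List.mem_cons] at hx'
          rw [hSdef, SimpleGraph.Walk.mem_support_append_iff] at hx
          rcases hx with hx | hx
          · rcases hx' with rfl | hx'
            · exact hpR₁ hx
            · by_cases hxw : x = w
              · subst hxw; exact hdisj x hx' hwT₂
              · exact hR₁first x hx hxw (Or.inl hx')
          · have hx2 := SimpleGraph.Walk.support_dropUntil_subset _ _ hx
            rcases hx' with rfl | hx'
            · exact start_not_mem_dropUntil T₂ hT₂path hwT₂ hwp hx
            · exact hdisj x hx' hx2
        obtain ⟨s₀, s₁, S', hS'trim, hS's, -⟩ := trim S A B hr₀A hb₂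
        refine ⟨s₀, s₁, _, _, S', SimpleGraph.Walk.cons hadj T₁, hS'trim, hTtrim,
          fun x hx => hSavoidT x (hS's x hx)⟩
    · push_neg at hhit
      exact ⟨r₀, r₁, _, _, R, T₂, ⟨hRpath, hr₀A, hr₁B, hRA, hRB⟩, hT₂trim',
        fun x hx hx2 => (hhit x hx).2 hx2⟩
  · -- p not on T₂ : extend T₁ by the edge p-a₁
    have hT₂trim' : Trimmed A B T₂ := by
      have hp₂A : p₂ ∈ A := by
        rcases hp₂ with rfl | hp₂
        · exact absurd T₂.start_mem_support (hdisj p₂ T₁.start_mem_support)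
        · exact hp₂
      refine ⟨hT₂path, hp₂A, hb₂, ?_, hT₂B⟩
      intro u hu huA
      exact hT₂A u hu (Set.mem_insert_of_mem _ huA)
    refine ⟨p, b₁, _, _, SimpleGraph.Walk.cons hadj T₁, T₂, hTtrim, hT₂trim', ?_⟩
    intro x hx
    rw [SimpleGraph.Walk.support_cons, List.mem_cons] at hx
    rcases hx with rfl | hx
    · exact hpT₂
    · exact hdisj x hx

lemma menger2 (B : Set V) (n : ℕ) : ∀ (A : Set V),
    (∃ x ∈ A, ∃ y ∈ B, ∃ W : G.Walk x y, W.length ≤ n) →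
    (∀ v : V, ∃ x ∈ A, ∃ y ∈ B, ∃ W : G.Walk x y, v ∉ W.support) →
    ∃ (p p' q q' : V) (P : G.Walk p p') (Q : G.Walk q q'),
      Trimmed A B P ∧ Trimmed A B Q ∧ ∀ x ∈ P.support, x ∉ Q.support := by
  induction n with
  | zero =>
    intro A hex hnosep
    obtain ⟨x, hx, y, hy, W, hWlen⟩ := hex
    obtain ⟨p, p', P, hPtrim, hPs, hPlen⟩ := trim W A B hx hy
    have hP0 : P.length = 0 := by omega
    cases P with
    | cons h q => simp [SimpleGraph.Walk.length_cons] at hP0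
    | nil =>
      obtain ⟨r, hrA, r', hr'B, W₂, hW₂p⟩ := hnosep p
      obtain ⟨q, q', Q, hQtrim, hQs, -⟩ := trim W₂ A B hrA hr'B
      refine ⟨p, p, q, q', .nil, Q, hPtrim, hQtrim, ?_⟩
      intro z hz
      simp only [SimpleGraph.Walk.support_nil, List.mem_singleton] at hz
      subst hz
      exact fun h => hW₂p (hQs z h)
  | succ n ih =>
    intro A hex hnosep
    obtain ⟨x, hx, y, hy, W, hWlen⟩ := hex
    obtain ⟨p, p', P, hPtrim, hPs, hPlen⟩ := trim W A B hx hy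
    obtain ⟨hPpath, hpA, hp'B, hPA, hPB⟩ := hPtrim
    cases P with
    | nil =>
      -- length 0, same as base case
      obtain ⟨r, hrA, r', hr'B, W₂, hW₂p⟩ := hnosep p
      obtain ⟨q, q', Q, hQtrim, hQs, -⟩ := trim W₂ A B hrA hr'B
      refine ⟨p, p, q, q', .nil, Q, ⟨hPpath, hpA, hp'B, hPA, hPB⟩, hQtrim, ?_⟩
      intro z hz
      simp only [SimpleGraph.Walk.support_nil, List.mem_singleton] at hz
      subst hz
      exact fun h => hW₂p (hQs z h)
    | cons hadj P₁ =>
      rename_i a₁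
      have hpP₁ : p ∉ P₁.support := by
        have := hPpath.support_nodup
        rw [SimpleGraph.Walk.support_cons] at this
        exact (List.nodup_cons.mp this).1
      have ha₁A : a₁ ∉ A := by
        intro h
        have := hPA a₁ (by rw [SimpleGraph.Walk.support_cons]; exact
          List.mem_cons_of_mem _ P₁.start_mem_support) h
        exact hadj.ne this.symm
      have hpB : p ∉ B := by
        intro h
        have := hPB p (SimpleGraph.Walk.start_mem_support _) h
        subst this
        exact hpP₁ P₁.end_mem_support
      have hex' : ∃ x ∈ insert a₁ A, ∃ y ∈ B, ∃ W : G.Walk x y, W.length ≤ n := by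
        refine ⟨a₁, Set.mem_insert _ _, p', hp'B, P₁, ?_⟩
        have : (SimpleGraph.Walk.cons hadj P₁).length = P₁.length + 1 := by
          simp [SimpleGraph.Walk.length_cons]
        omega
      have hnosep' : ∀ v : V, ∃ x ∈ insert a₁ A, ∃ y ∈ B, ∃ W : G.Walk x y,
          v ∉ W.support := by
        intro v
        obtain ⟨x', hx', y', hy', W', hW'⟩ := hnosep v
        exact ⟨x', Set.mem_insert_of_mem _ hx', y', hy', W', hW'⟩
      obtain ⟨q₁, q₁', q₂, q₂', T₁, T₂, hT₁trim, hT₂trim, hTdisj⟩ := ih _ hex' hnosep'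
      by_cases h₁ : q₁ = a₁
      · subst h₁
        exact menger2_step A B hnosep hpA hpB hadj ha₁A T₁ T₂ hT₁trim hT₂trim hTdisj
      · by_cases h₂ : q₂ = a₁
        · subst h₂
          exact menger2_step A B hnosep hpA hpB hadj ha₁A T₂ T₁ hT₂trim hT₁trim
            (fun x hx hx' => hTdisj x hx' hx)
        · -- both start in A
          obtain ⟨hT₁path, hq₁, hq₁', hT₁A, hT₁B⟩ := hT₁trim
          obtain ⟨hT₂path, hq₂, hq₂', hT₂A, hT₂B⟩ := hT₂trim
          have hq₁A : q₁ ∈ A := by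
            rcases Set.mem_insert_iff.mp hq₁ with h | h
            · exact absurd h h₁
            · exact h
          have hq₂A : q₂ ∈ A := by
            rcases Set.mem_insert_iff.mp hq₂ with h | h
            · exact absurd h h₂
            · exact h
          refine ⟨q₁, q₁', q₂, q₂', T₁, T₂,
            ⟨hT₁path, hq₁A, hq₁', fun u hu huA => hT₁A u hu (Set.mem_insert_of_mem _ huA),
              hT₁B⟩,
            ⟨hT₂path, hq₂A, hq₂', fun u hu huA => hT₂A u hu (Set.mem_insert_of_mem _ huA),
              hT₂B⟩, hTdisj⟩

lemma bridge_case2 {cs cs' : V} {S : G.Walk cs cs} {S' : G.Walk cs' cs'}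
    {p p' q q' : V} (P : G.Walk p p') (Q : G.Walk q q')
    (α : G.Walk p q) (β : G.Walk q' p')
    (hαpath : α.IsPath) (hβpath : β.IsPath)
    (hαs : ∀ x ∈ α.support, x ∈ S.support) (hβs : ∀ x ∈ β.support, x ∈ S'.support)
    (hPtrim : Trimmed {x | x ∈ S.support} {x | x ∈ S'.support} P)
    (hQtrim : Trimmed {x | x ∈ S.support} {x | x ∈ S'.support} Q)
    (hdisj : ∀ x ∈ P.support, x ∉ Q.support)
    (hαβ : ∀ x, x ∈ α.support → x ∈ β.support → False)
    (hpq' : p ≠ q')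
    (hP1 : 1 ≤ P.length) (hQ1 : 1 ≤ Q.length) :
    ∃ (cD : V) (D : G.Walk cD cD), D.IsCycle ∧
      (∃ u w, u ∈ D.support ∧ w ∈ D.support ∧ u ∈ S.support ∧ w ∈ S.support ∧ u ≠ w) ∧
      (∃ u w, u ∈ D.support ∧ w ∈ D.support ∧ u ∈ S'.support ∧ w ∈ S'.support ∧ u ≠ w) := by
  obtain ⟨hPpath, hpS, hp'S', hPA, hPB⟩ := hPtrim
  obtain ⟨hQpath, hqS, hq'S', hQA, hQB⟩ := hQtrim
  have hpq : p ≠ q := fun h => hdisj p P.start_mem_support (h ▸ Q.start_mem_support)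
  have hp'q' : p' ≠ q' := fun h => hdisj p' P.end_mem_support (h ▸ Q.end_mem_support)
  have hα1 : 1 ≤ α.length := one_le_length_of_ne α hpq
  have hβ1 : 1 ≤ β.length := one_le_length_of_ne β hp'q'.symm
  have hW₁path : (α.append Q).IsPath := by
    apply pathGlue α Q hαpath hQpath
    intro x hxα hxQ
    exact hQA x hxQ (hαs x hxα)
  have hW₂path : (β.append P.reverse).IsPath := by
    apply pathGlue β P.reverse hβpath hPpath.reverse
    intro x hxβ hxP
    rw [SimpleGraph.Walk.support_reverse, List.mem_reverse] at hxP
    exact hPB x hxP (hβs x hxβ)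
  have hD : ((α.append Q).append (β.append P.reverse)).IsCycle := by
    apply cycGlue _ _ hW₁path hW₂path hpq'
    · intro x hx₁ hx₂
      rw [SimpleGraph.Walk.mem_support_append_iff] at hx₁ hx₂
      rcases hx₂ with hx₂ | hx₂
      · rcases hx₁ with hx₁ | hx₁
        · exact absurd (hαβ x hx₁ hx₂) (fun h => h)
        · exact Or.inr (hQB x hx₁ (hβs x hx₂))
      · rw [SimpleGraph.Walk.support_reverse, List.mem_reverse] at hx₂
        rcases hx₁ with hx₁ | hx₁
        · exact Or.inl ((hPA x hx₂ (hαs x hx₁)).symm ▸ rfl)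
        · exact absurd (hdisj x hx₂ hx₁) (fun h => h)
    · simp only [SimpleGraph.Walk.length_append, SimpleGraph.Walk.length_reverse]
      omega
  refine ⟨p, _, hD, ⟨p, q, ?_, ?_, hpS, hqS, hpq⟩, ⟨q', p', ?_, ?_, hq'S', hp'S', hp'q'.symm⟩⟩
  · rw [SimpleGraph.Walk.mem_support_append_iff]
    exact Or.inl (by rw [SimpleGraph.Walk.mem_support_append_iff]; exact Or.inl α.start_mem_support)
  · rw [SimpleGraph.Walk.mem_support_append_iff]
    exact Or.inl (by rw [SimpleGraph.Walk.mem_support_append_iff]; exact Or.inl α.end_mem_support)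
  · rw [SimpleGraph.Walk.mem_support_append_iff]
    exact Or.inr (by rw [SimpleGraph.Walk.mem_support_append_iff]; exact Or.inl β.start_mem_support)
  · rw [SimpleGraph.Walk.mem_support_append_iff]
    exact Or.inr (by rw [SimpleGraph.Walk.mem_support_append_iff]; exact Or.inl β.end_mem_support)

lemma bridge_case1 {cs cs' : V} {S : G.Walk cs cs} {S' : G.Walk cs' cs'}
    (hS : S.IsCycle) (hS' : S'.IsCycle) {v₀ : V}
    (hv₀S : v₀ ∈ S.support) (hv₀S' : v₀ ∈ S'.support)
    (hone : ∀ x, x ∈ S.support → x ∈ S'.support → x = v₀)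
    {q q' : V} (Q : G.Walk q q')
    (hQtrim : Trimmed {x | x ∈ S.support} {x | x ∈ S'.support} Q)
    (hv₀Q : v₀ ∉ Q.support) :
    ∃ (cD : V) (D : G.Walk cD cD), D.IsCycle ∧
      (∃ u w, u ∈ D.support ∧ w ∈ D.support ∧ u ∈ S.support ∧ w ∈ S.support ∧ u ≠ w) ∧
      (∃ u w, u ∈ D.support ∧ w ∈ D.support ∧ u ∈ S'.support ∧ w ∈ S'.support ∧ u ≠ w) := by
  obtain ⟨hQpath, hqS, hq'S', hQA, hQB⟩ := hQtrim
  have hqv₀ : q ≠ v₀ := fun h => hv₀Q (h ▸ Q.start_mem_support)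
  have hq'v₀ : q' ≠ v₀ := fun h => hv₀Q (h ▸ Q.end_mem_support)
  have hQ1 : 1 ≤ Q.length := by
    apply one_le_length_of_ne
    intro h
    exact hqv₀ (hone q hqS (h ▸ hq'S'))
  obtain ⟨β, -, hβpath, -, -, -, hβs, -, -, -, hβ1, -, -, -⟩ :=
    cycle_arcs S' hS' hq'S' hv₀S' hq'v₀
  obtain ⟨α, -, hαpath, -, -, -, hαs, -, -, -, hα1, -, -, -⟩ :=
    cycle_arcs S hS hv₀S hqS (Ne.symm hqv₀)
  have hW₁path : (Q.append β).IsPath := by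
    apply pathGlue Q β hQpath hβpath
    intro x hxQ hxβ
    exact hQB x hxQ (hβs x hxβ)
  have hD : ((Q.append β).append α).IsCycle := by
    apply cycGlue _ _ hW₁path hαpath hqv₀
    · intro x hx₁ hx₂
      rw [SimpleGraph.Walk.mem_support_append_iff] at hx₁
      rcases hx₁ with hx₁ | hx₁
      · exact Or.inl ((hQA x hx₁ (hαs x hx₂)).symm ▸ rfl)
      · exact Or.inr (hone x (hαs x hx₂) (hβs x hx₁))
    · simp only [SimpleGraph.Walk.length_append]
      omega
  refine ⟨q, _, hD, ⟨q, v₀, ?_, ?_, hqS, hv₀S, hqv₀⟩, ⟨q', v₀, ?_, ?_, hq'S', hv₀S', hq'v₀⟩⟩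
  · rw [SimpleGraph.Walk.mem_support_append_iff]
    exact Or.inl (by rw [SimpleGraph.Walk.mem_support_append_iff]; exact Or.inl Q.start_mem_support)
  · rw [SimpleGraph.Walk.mem_support_append_iff]
    exact Or.inr α.start_mem_support
  · rw [SimpleGraph.Walk.mem_support_append_iff]
    exact Or.inl (by rw [SimpleGraph.Walk.mem_support_append_iff]; exact Or.inl Q.end_mem_support)
  · rw [SimpleGraph.Walk.mem_support_append_iff]
    exact Or.inr α.start_mem_support

lemma arc_avoiding {cs : V} {S : G.Walk cs cs} (hS : S.IsCycle) {p q v₀ : V}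
    (hp : p ∈ S.support) (hq : q ∈ S.support) (hpq : p ≠ q)
    (hv₀p : v₀ ≠ p) (hv₀q : v₀ ≠ q) :
    ∃ α : G.Walk p q, α.IsPath ∧ (∀ x ∈ α.support, x ∈ S.support) ∧ v₀ ∉ α.support := by
  obtain ⟨α₁, α₂, hα₁path, hα₂path, -, -, hα₁s, hα₂s, hint, -, -, -, -, -⟩ :=
    cycle_arcs S hS hp hq hpq
  by_cases hv : v₀ ∈ α₁.support
  · refine ⟨α₂, hα₂path, hα₂s, fun h => ?_⟩
    rcases hint v₀ hv h with rfl | rfl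
    · exact hv₀p rfl
    · exact hv₀q rfl
  · exact ⟨α₁, hα₁path, hα₁s, hv⟩

lemma bridge {cs cs' : V} {S : G.Walk cs cs} {S' : G.Walk cs' cs'}
    (hS : S.IsCycle) (hS' : S'.IsCycle)
    (hone : ∀ x y, x ∈ S.support → x ∈ S'.support → y ∈ S.support → y ∈ S'.support → x = y)
    {p p' q q' : V} (P : G.Walk p p') (Q : G.Walk q q')
    (hPtrim : Trimmed {x | x ∈ S.support} {x | x ∈ S'.support} P)
    (hQtrim : Trimmed {x | x ∈ S.support} {x | x ∈ S'.support} Q)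
    (hdisj : ∀ x ∈ P.support, x ∉ Q.support) :
    ∃ (cD : V) (D : G.Walk cD cD), D.IsCycle ∧
      (∃ u w, u ∈ D.support ∧ w ∈ D.support ∧ u ∈ S.support ∧ w ∈ S.support ∧ u ≠ w) ∧
      (∃ u w, u ∈ D.support ∧ w ∈ D.support ∧ u ∈ S'.support ∧ w ∈ S'.support ∧ u ≠ w) := by
  classical
  have hpq : p ≠ q := fun h => hdisj p P.start_mem_support (h ▸ Q.start_mem_support)
  have hp'q' : p' ≠ q' := fun h => hdisj p' P.end_mem_support (h ▸ Q.end_mem_support)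
  have hpS : p ∈ S.support := hPtrim.2.1
  have hp'S' : p' ∈ S'.support := hPtrim.2.2.1
  have hqS : q ∈ S.support := hQtrim.2.1
  have hq'S' : q' ∈ S'.support := hQtrim.2.2.1
  by_cases hcom : ∃ v₀, v₀ ∈ S.support ∧ v₀ ∈ S'.support
  · obtain ⟨v₀, hv₀S, hv₀S'⟩ := hcom
    have honev : ∀ x, x ∈ S.support → x ∈ S'.support → x = v₀ := fun x hx hx' =>
      hone x v₀ hx hx' hv₀S hv₀S'
    by_cases hv₀P : v₀ ∈ P.support
    · exact bridge_case1 hS hS' hv₀S hv₀S' honev Q hQtrim (hdisj v₀ hv₀P)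
    · by_cases hv₀Q : v₀ ∈ Q.support
      · exact bridge_case1 hS hS' hv₀S hv₀S' honev P hPtrim hv₀P
      · -- v₀ on neither path: use arcs avoiding v₀
        have hv₀p : v₀ ≠ p := fun h => hv₀P (h ▸ P.start_mem_support)
        have hv₀q : v₀ ≠ q := fun h => hv₀Q (h ▸ Q.start_mem_support)
        have hv₀p' : v₀ ≠ p' := fun h => hv₀P (h ▸ P.end_mem_support)
        have hv₀q' : v₀ ≠ q' := fun h => hv₀Q (h ▸ Q.end_mem_support)
        obtain ⟨α, hαpath, hαs, hv₀α⟩ := arc_avoiding hS hpS hqS hpq hv₀p hv₀q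
        obtain ⟨β, hβpath, hβs, hv₀β⟩ :=
          arc_avoiding hS' hq'S' hp'S' (Ne.symm hp'q') hv₀q' hv₀p'
        refine bridge_case2 P Q α β hαpath hβpath hαs hβs hPtrim hQtrim hdisj ?_ ?_ ?_ ?_
        · intro x hxα hxβ
          have := honev x (hαs x hxα) (hβs x hxβ)
          subst this
          exact hv₀α hxα
        · intro h
          have := honev p hpS (h ▸ hq'S')
          exact hv₀p this.symm
        · apply one_le_length_of_ne
          intro h
          have := honev p hpS (h ▸ hp'S')
          exact hv₀p this.symm
        · apply one_le_length_of_ne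
          intro h
          have := honev q hqS (h ▸ hq'S')
          exact hv₀q this.symm
  · obtain ⟨α, -, hαpath, -, -, -, hαs, -, -, -, -, -, -, -⟩ :=
      cycle_arcs S hS hpS hqS hpq
    obtain ⟨β, -, hβpath, -, -, -, hβs, -, -, -, -, -, -, -⟩ :=
      cycle_arcs S' hS' hq'S' hp'S' (Ne.symm hp'q')
    refine bridge_case2 P Q α β hαpath hβpath hαs hβs hPtrim hQtrim hdisj ?_ ?_ ?_ ?_
    · intro x hxα hxβ
      exact hcom ⟨x, hαs x hxα, hβs x hxβ⟩
    · intro h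
      exact hcom ⟨p, hpS, h ▸ hq'S'⟩
    · apply one_le_length_of_ne
      intro h
      exact hcom ⟨p, hpS, h ▸ hp'S'⟩
    · apply one_le_length_of_ne
      intro h
      exact hcom ⟨q, hqS, h ▸ hq'S'⟩

end Menger

/-- The separation construction from a cut vertex. -/
lemma sep_construction {a a' : V} (C : G.Walk a a) (C' : G.Walk a' a') (v : V)
    (hsep : ∀ x ∈ C.support, ∀ y ∈ C'.support, ∀ W : G.Walk x y, v ∈ W.support) :
    ∃ (S₁ S₂ : Set V), S₁ ∪ S₂ = Set.univ ∧ S₁ ∩ S₂ = {v} ∧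
        (∀ x y, G.Adj x y → (x ∈ S₁ ∧ y ∈ S₁) ∨ (x ∈ S₂ ∧ y ∈ S₂)) ∧
        (∀ x ∈ C.support, x ∈ S₁) ∧ (∀ x ∈ C'.support, x ∈ S₂) := by
  classical
  set R : Set V := {x | ∃ b ∈ C.support, ∃ W : G.Walk b x, v ∉ W.support} with hRdef
  have hvR : v ∉ R := by
    rintro ⟨b, hb, W, hW⟩
    exact hW W.end_mem_support
  have hstep : ∀ x y, G.Adj x y → y ≠ v → x ∈ R → y ∈ R := by
    rintro x y hxy hyv ⟨b, hb, W, hW⟩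
    refine ⟨b, hb, W.concat hxy, ?_⟩
    simp only [SimpleGraph.Walk.support_concat, List.concat_eq_append, List.mem_append,
      List.mem_singleton]
    rintro (h | h)
    · exact hW h
    · exact hyv h.symm
  refine ⟨R ∪ {v}, Rᶜ ∪ {v}, ?_, ?_, ?_, ?_, ?_⟩
  · ext x
    simp only [Set.mem_union, Set.mem_singleton_iff, Set.mem_compl_iff, Set.mem_univ, iff_true]
    by_cases h : x ∈ R
    · exact Or.inl (Or.inl h)
    · exact Or.inr (Or.inl h)
  · ext x
    simp only [Set.mem_inter_iff, Set.mem_union, Set.mem_singleton_iff, Set.mem_compl_iff]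
    constructor
    · rintro ⟨h1 | h1, h2 | h2⟩
      · exact absurd h1 h2
      · exact h2
      · exact h1
      · exact h1
    · rintro rfl
      exact ⟨Or.inr rfl, Or.inr rfl⟩
  · intro x y hxy
    by_cases hxv : x = v
    · subst hxv
      by_cases hy : y ∈ R
      · exact Or.inl ⟨Or.inr rfl, Or.inl hy⟩
      · exact Or.inr ⟨Or.inr rfl, Or.inl hy⟩
    · by_cases hyv : y = v
      · subst hyv
        by_cases hx : x ∈ R
        · exact Or.inl ⟨Or.inl hx, Or.inr rfl⟩
        · exact Or.inr ⟨Or.inl hx, Or.inr rfl⟩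
      · by_cases hx : x ∈ R
        · exact Or.inl ⟨Or.inl hx, Or.inl (hstep x y hxy hyv hx)⟩
        · refine Or.inr ⟨Or.inl hx, Or.inl ?_⟩
          intro hy
          exact hx (hstep y x hxy.symm hxv hy)
  · intro x hx
    by_cases hxv : x = v
    · exact Or.inr hxv
    · refine Or.inl ⟨x, hx, .nil, ?_⟩
      simp only [SimpleGraph.Walk.support_nil, List.mem_singleton]
      exact fun h => hxv h.symm
  · intro x hx
    by_cases hxv : x = v
    · exact Or.inr hxv
    · refine Or.inl ?_
      rintro ⟨b, hb, W, hW⟩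
      exact hW (hsep b hb x hx W)


lemma chain_out {e f : Sym2 V} (h : EdgeChain G e f) :
    ∀ {a a' : V} (C : G.Walk a a) (C' : G.Walk a' a'),
      IsMinimalCircuit G C → IsMinimalCircuit G C' → e ∈ C.edges → f ∈ C'.edges →
      ∃ (n : ℕ) (c : Fin (n + 1) → (v : V) × G.Walk v v),
        (∀ i, IsMinimalCircuit G (c i).2) ∧
        c 0 = ⟨a, C⟩ ∧ c (Fin.last n) = ⟨a', C'⟩ ∧
        ∀ i : Fin n, ∃ e' : Sym2 V,
          e' ∈ (c i.castSucc).2.edges ∧ e' ∈ (c i.succ).2.edges := by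
  induction h using Relation.ReflTransGen.head_induction_on with
  | refl =>
    intro a a' C C' hC hC' he hf
    refine ⟨1, Fin.cons ⟨a, C⟩ (fun _ => ⟨a', C'⟩), ?_, rfl, ?_, ?_⟩
    · intro i
      refine Fin.cases ?_ ?_ i
      · exact hC
      · intro j; rw [Fin.cons_succ]; exact hC'
    · rw [← Fin.succ_last, Fin.cons_succ]
    · intro i
      have hi : i = 0 := Subsingleton.elim i 0
      subst hi
      refine ⟨f, ?_, ?_⟩
      · rw [Fin.castSucc_zero, Fin.cons_zero]; exact he
      · rw [Fin.cons_succ]; exact hf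
  | head hstep htail ih =>
    rename_i e₀ e₁
    intro a a' C C' hC hC' he hf
    obtain ⟨vΔ, Δ, hΔmin, heΔ, he₁Δ⟩ := hstep
    obtain ⟨n, c, hmin, h0, hlast, hshare⟩ := ih Δ C' hΔmin hC' he₁Δ hf
    refine ⟨n + 1, Fin.cons ⟨a, C⟩ c, ?_, ?_, ?_, ?_⟩
    · intro i
      refine Fin.cases ?_ ?_ i
      · rw [Fin.cons_zero]; exact hC
      · intro j; rw [Fin.cons_succ]; exact hmin j
    · rw [Fin.cons_zero]
    · rw [← Fin.succ_last, Fin.cons_succ]; exact hlast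
    · intro i
      refine Fin.cases ?_ ?_ i
      · refine ⟨e₀, ?_, ?_⟩
        · rw [Fin.castSucc_zero, Fin.cons_zero]; exact he
        · rw [Fin.cons_succ, h0]; exact heΔ
      · intro j
        obtain ⟨e', h1, h2⟩ := hshare j
        refine ⟨e', ?_, ?_⟩
        · rw [Fin.castSucc_fin_succ, Fin.cons_succ]; exact h1
        · rw [Fin.cons_succ]; exact h2

end Stmt13Aux

/-- In a connected graph, two minimal circuits are either separated by a vertex
or joined by a sequence of minimal circuits in which consecutive circuits share
an edge. -/
theorem stmt13 {V : Type*} (G : SimpleGraph V) (hconn : G.Connected)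
    {a a' : V} (C : G.Walk a a) (C' : G.Walk a' a')
    (hC : IsMinimalCircuit G C) (hC' : IsMinimalCircuit G C') :
    (∃ (v : V) (S₁ S₂ : Set V), S₁ ∪ S₂ = Set.univ ∧ S₁ ∩ S₂ = {v} ∧
        (∀ x y, G.Adj x y → (x ∈ S₁ ∧ y ∈ S₁) ∨ (x ∈ S₂ ∧ y ∈ S₂)) ∧
        (∀ x ∈ C.support, x ∈ S₁) ∧ (∀ x ∈ C'.support, x ∈ S₂)) ∨
    (∃ (n : ℕ) (c : Fin (n + 1) → (v : V) × G.Walk v v),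
        (∀ i, IsMinimalCircuit G (c i).2) ∧
        c 0 = ⟨a, C⟩ ∧ c (Fin.last n) = ⟨a', C'⟩ ∧
        ∀ i : Fin n, ∃ e : Sym2 V,
          e ∈ (c i.castSucc).2.edges ∧ e ∈ (c i.succ).2.edges) := by
  classical
  by_cases hsep : ∃ v, ∀ x ∈ C.support, ∀ y ∈ C'.support, ∀ W : G.Walk x y, v ∈ W.support
  · obtain ⟨v, hv⟩ := hsep
    obtain ⟨S₁, S₂, h1, h2, h3, h4, h5⟩ := Stmt13Aux.sep_construction C C' v hv
    exact Or.inl ⟨v, S₁, S₂, h1, h2, h3, h4, h5⟩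
  · right
    push_neg at hsep
    have hCcyc := hC.1
    have hC'cyc := hC'.1
    obtain ⟨e, he⟩ := Stmt13Aux.exists_edge_of_one_le C
      (by have := hCcyc.three_le_length; omega)
    obtain ⟨f, hf⟩ := Stmt13Aux.exists_edge_of_one_le C'
      (by have := hC'cyc.three_le_length; omega)
    suffices hchain : Stmt13Aux.EdgeChain G e f by
      exact Stmt13Aux.chain_out hchain C C' hC hC' he hf
    by_cases h2 : ∃ x y, x ≠ y ∧ x ∈ C.support ∧ x ∈ C'.support ∧
        y ∈ C.support ∧ y ∈ C'.support
    · obtain ⟨x, y, hxy, hx1, hx2, hy1, hy2⟩ := h2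
      exact Stmt13Aux.chain_two_cycles C C' hCcyc hC'cyc hx1 hx2 hy1 hy2 hxy e he f hf
    · have hone : ∀ x y, x ∈ C.support → x ∈ C'.support → y ∈ C.support →
          y ∈ C'.support → x = y := by
        intro x y hx hx' hy hy'
        by_contra hne
        exact h2 ⟨x, y, hne, hx, hx', hy, hy'⟩
      obtain ⟨W₀⟩ := hconn a a'
      have hex : ∃ x ∈ {x | x ∈ C.support}, ∃ y ∈ {x | x ∈ C'.support},
          ∃ W : G.Walk x y, W.length ≤ W₀.length :=
        ⟨a, C.start_mem_support, a', C'.start_mem_support, W₀, le_rfl⟩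
      have hnosep : ∀ v : V, ∃ x ∈ {x | x ∈ C.support}, ∃ y ∈ {x | x ∈ C'.support},
          ∃ W : G.Walk x y, v ∉ W.support := by
        intro v
        obtain ⟨x, hx, y, hy, W, hW⟩ := hsep v
        exact ⟨x, hx, y, hy, W, hW⟩
      obtain ⟨p, p', q, q', P, Q, hPtrim, hQtrim, hdisj⟩ :=
        Stmt13Aux.menger2 {x | x ∈ C'.support} W₀.length {x | x ∈ C.support} hex hnosep
      obtain ⟨cD, D, hD, ⟨u, w, huD, hwD, huC, hwC, huw⟩,
          ⟨u', w', hu'D, hw'D, hu'C', hw'C', hu'w'⟩⟩ :=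
        Stmt13Aux.bridge hCcyc hC'cyc hone P Q hPtrim hQtrim hdisj
      obtain ⟨d, hd⟩ := Stmt13Aux.exists_edge_of_one_le D
        (by have := hD.three_le_length; omega)
      exact (Stmt13Aux.chain_two_cycles C D hCcyc hD huC huD hwC hwD huw e he d hd).trans
        (Stmt13Aux.chain_two_cycles D C' hD hC'cyc hu'D hu'C' hw'D hw'C' hu'w' d hd f hf)
end

section
/- Let Δ be a graph with a non-minimal simple circuit C passing through two edges e and e′ both incident to a common vertex. Then C decomposes via a short-circuit into two simple circuits C₁, C₂ each of strictly smaller length, such that either e and e′ both lie on one of them, or e ⊆ C₁, e′ ⊆ C₂ and C₁, C₂ share an edge. -/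
open SimpleGraph

lemma mem_tail_of_closed {V : Type*} {G : SimpleGraph V} {u x : V}
    (c : G.Walk u u) (hn : ¬ c.Nil) (hx : x ∈ c.support) : x ∈ c.support.tail := by
  rcases (Walk.mem_support_iff _).1 hx with rfl | h
  · rw [← Walk.support_tail_of_not_nil c hn]
    exact Walk.end_mem_support _
  · exact h

lemma aux15 {V : Type*} (G : SimpleGraph V) {a p q : V} (C : G.Walk a a)
    (hC : C.IsCycle) (A : G.Walk p q) (hA : IsShortCircuit G C A) :
    ∃ (C₁ : G.Walk p p) (C₂ : G.Walk p p),
      C₁.IsCycle ∧ C₂.IsCycle ∧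
      C₁.length < C.length ∧ C₂.length < C.length ∧
      C₁.edges ⊆ C.edges ++ A.edges ∧ C₂.edges ⊆ C.edges ++ A.edges ∧
      (∀ f ∈ C.edges, f ∈ C₁.edges ∨ f ∈ C₂.edges) ∧
      ∃ f : Sym2 V, f ∈ C₁.edges ∧ f ∈ C₂.edges := by
  classical
  obtain ⟨hApath, hpq, hp, hq, hmeet, hshort⟩ := hA
  have hCnil : ¬ C.Nil := hC.not_nil
  set C' := C.rotate p hp with hC'def
  have hC' : C'.IsCycle := hC.rotate hp
  have hC'nil : ¬ C'.Nil := hC'.not_nil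
  have htails : C'.support.tail ~r C.support.tail := Walk.support_rotate C p hp
  have hSupp : ∀ x, x ∈ C'.support ↔ x ∈ C.support := by
    intro x
    constructor
    · intro h
      exact List.mem_of_mem_tail (htails.mem_iff.1 (mem_tail_of_closed _ hC'nil h))
    · intro h
      exact List.mem_of_mem_tail (htails.mem_iff.2 (mem_tail_of_closed _ hCnil h))
  have hEdges : ∀ f, f ∈ C'.edges ↔ f ∈ C.edges := fun f => (Walk.rotate_edges C p hp).mem_iff
  have hLen : C'.length = C.length := by
    rw [← Walk.length_edges, ← Walk.length_edges]
    exact (Walk.rotate_edges C p hp).perm.length_eq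
  have hq' : q ∈ C'.support := (hSupp q).2 hq
  set D₁ := C'.takeUntil q hq' with hD₁def
  set D₂ := C'.dropUntil q hq' with hD₂def
  have hspec : D₁.append D₂ = C' := Walk.take_spec C' hq'
  -- nodup of the tails
  have hnd : (D₁.support.tail ++ D₂.support.tail).Nodup := by
    rw [← Walk.tail_support_append, hspec]
    exact hC'.support_nodup
  have nd₁ : D₁.support.tail.Nodup := hnd.of_append_left
  have nd₂ : D₂.support.tail.Nodup := hnd.of_append_right
  have hdisj : D₁.support.tail.Disjoint D₂.support.tail := List.disjoint_of_nodup_append hnd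
  have hqD1 : q ∈ D₁.support.tail := Walk.end_mem_tail_support_of_ne hpq D₁
  have hpD2 : p ∈ D₂.support.tail := Walk.end_mem_tail_support_of_ne hpq.symm D₂
  have hpD1 : p ∉ D₁.support.tail := fun h => hdisj h hpD2
  have hqD2 : q ∉ D₂.support.tail := fun h => hdisj hqD1 h
  have hD₁path : D₁.IsPath := by
    apply Walk.IsPath.mk'
    rw [Walk.support_eq_cons]
    exact List.nodup_cons.2 ⟨hpD1, nd₁⟩
  have hD₂path : D₂.IsPath := by
    apply Walk.IsPath.mk'
    rw [Walk.support_eq_cons]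
    exact List.nodup_cons.2 ⟨hqD2, nd₂⟩
  -- A has positive length
  have hAlen : 0 < A.length := by
    exact Nat.pos_of_ne_zero fun h => hpq (Walk.eq_of_length_eq_zero h)
  -- edges of A are disjoint from edges of C
  have hAC : ∀ f ∈ A.edges, f ∉ C.edges := by
    intro f hfA hfC
    induction f with
    | h x y =>
      have hadj : G.Adj x y := Walk.adj_of_mem_edges A hfA
      have hx : x = p ∨ x = q :=
        hmeet x (Walk.fst_mem_support_of_mem_edges A hfA) (Walk.fst_mem_support_of_mem_edges C hfC)
      have hy : y = p ∨ y = q :=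
        hmeet y (Walk.snd_mem_support_of_mem_edges A hfA) (Walk.snd_mem_support_of_mem_edges C hfC)
      have hpq' : s(p, q) ∈ C.edges := by
        rcases hx with rfl | rfl <;> rcases hy with rfl | rfl
        · exact absurd rfl hadj.ne
        · exact hfC
        · rwa [Sym2.eq_swap]
        · exact absurd rfl hadj.ne
      have hGpq : G.Adj p q := Walk.adj_of_mem_edges C hpq'
      have := hshort (Walk.cons hGpq Walk.nil) (by simp [hpq'])
      simp only [Walk.length_cons, Walk.length_nil] at this
      omega
  -- the two circuits
  refine ⟨D₁.append A.reverse, A.append D₂, ?_, ?_, ?_, ?_, ?_, ?_, ?_, ?_⟩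
  · rw [Walk.isCycle_def]
    refine ⟨?_, ?_, ?_⟩
    · rw [Walk.isTrail_def, Walk.edges_append]
      refine List.Nodup.append hD₁path.isTrail.edges_nodup ?_ ?_
      · rw [Walk.edges_reverse]
        exact List.nodup_reverse.2 hApath.isTrail.edges_nodup
      · intro f hf1 hf2
        rw [Walk.edges_reverse, List.mem_reverse] at hf2
        exact hAC f hf2 ((hEdges f).1 (Walk.edges_takeUntil_subset C' hq' hf1))
    · intro h
      have : (D₁.append A.reverse).length = 0 := by rw [h]; rfl
      rw [Walk.length_append, Walk.length_reverse] at this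
      omega
    · rw [Walk.tail_support_append]
      refine List.Nodup.append nd₁ ?_ ?_
      · have : A.reverse.support.Nodup := by
          rw [Walk.support_reverse]; exact List.nodup_reverse.2 hApath.support_nodup
        exact List.Nodup.sublist (List.tail_sublist _) this
      · intro x hx1 hx2
        have hxC : x ∈ C.support :=
          (hSupp x).1 (Walk.support_takeUntil_subset C' hq' (List.mem_of_mem_tail hx1))
        have hxA : x ∈ A.support := by
          rw [← List.mem_reverse, ← Walk.support_reverse]
          exact List.mem_of_mem_tail hx2
        rcases hmeet x hxA hxC with rfl | rfl
        · exact hpD1 hx1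
        · -- q is the head of A.reverse.support, not in its tail
          have : A.reverse.support.Nodup := by
            rw [Walk.support_reverse]; exact List.nodup_reverse.2 hApath.support_nodup
          rw [Walk.support_eq_cons] at this
          exact (List.nodup_cons.1 this).1 hx2
  · rw [Walk.isCycle_def]
    refine ⟨?_, ?_, ?_⟩
    · rw [Walk.isTrail_def, Walk.edges_append]
      refine List.Nodup.append hApath.isTrail.edges_nodup hD₂path.isTrail.edges_nodup ?_
      intro f hf1 hf2
      exact hAC f hf1 ((hEdges f).1 (Walk.edges_dropUntil_subset C' hq' hf2))
    · intro h
      have : (A.append D₂).length = 0 := by rw [h]; rfl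
      rw [Walk.length_append] at this
      omega
    · rw [Walk.tail_support_append]
      refine List.Nodup.append ?_ nd₂ ?_
      · exact (List.Nodup.sublist (List.tail_sublist _) hApath.support_nodup)
      · intro x hx1 hx2
        have hxC : x ∈ C.support :=
          (hSupp x).1 (Walk.support_dropUntil_subset C' hq' (List.mem_of_mem_tail hx2))
        have hxA : x ∈ A.support := List.mem_of_mem_tail hx1
        rcases hmeet x hxA hxC with rfl | rfl
        · have := hApath.support_nodup
          rw [Walk.support_eq_cons] at this
          exact (List.nodup_cons.1 this).1 hx1
        · exact hqD2 hx2
  · -- length of C₁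
    have hDlen : D₁.length + D₂.length = C.length := by
      have := congrArg Walk.length hspec
      rwa [Walk.length_append, hLen] at this
    have hAD2 : A.length < D₂.length := by
      have := hshort D₂.reverse (by
        intro f hf
        rw [Walk.edges_reverse, List.mem_reverse] at hf
        exact (hEdges f).1 (Walk.edges_dropUntil_subset C' hq' hf))
      rwa [Walk.length_reverse] at this
    rw [Walk.length_append, Walk.length_reverse]
    omega
  · -- length of C₂
    have hDlen : D₁.length + D₂.length = C.length := by
      have := congrArg Walk.length hspec
      rwa [Walk.length_append, hLen] at this
    have hAD1 : A.length < D₁.length :=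
      hshort D₁ (fun f hf => (hEdges f).1 (Walk.edges_takeUntil_subset C' hq' hf))
    rw [Walk.length_append]
    omega
  · intro f hf
    rw [Walk.edges_append] at hf
    rcases List.mem_append.1 hf with h | h
    · exact List.mem_append.2 (Or.inl ((hEdges f).1 (Walk.edges_takeUntil_subset C' hq' h)))
    · rw [Walk.edges_reverse, List.mem_reverse] at h
      exact List.mem_append.2 (Or.inr h)
  · intro f hf
    rw [Walk.edges_append] at hf
    rcases List.mem_append.1 hf with h | h
    · exact List.mem_append.2 (Or.inr h)
    · exact List.mem_append.2 (Or.inl ((hEdges f).1 (Walk.edges_dropUntil_subset C' hq' h)))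
  · intro f hf
    have hf' : f ∈ C'.edges := (hEdges f).2 hf
    rw [← hspec, Walk.edges_append] at hf'
    rcases List.mem_append.1 hf' with h | h
    · exact Or.inl (by rw [Walk.edges_append]; exact List.mem_append.2 (Or.inl h))
    · exact Or.inr (by rw [Walk.edges_append]; exact List.mem_append.2 (Or.inr h))
  · obtain ⟨f, hf⟩ : ∃ f, f ∈ A.edges := by
      apply List.exists_mem_of_length_pos
      rwa [Walk.length_edges]
    refine ⟨f, ?_, ?_⟩
    · rw [Walk.edges_append, Walk.edges_reverse]
      exact List.mem_append.2 (Or.inr (List.mem_reverse.2 hf))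
    · rw [Walk.edges_append]
      exact List.mem_append.2 (Or.inl hf)

/-- A non-minimal simple circuit `C` through two distinct edges `e, e'` sharing
a vertex decomposes, via a short-circuit, into two strictly shorter simple
circuits `C₁, C₂` such that either `e` and `e'` both lie on one of them, or
`e ⊆ C₁`, `e' ⊆ C₂` and `C₁, C₂` share an edge. -/
theorem stmt15 {V : Type*} (G : SimpleGraph V) {a : V} (C : G.Walk a a)
    (hC : C.IsCycle)
    (hnonmin : ∃ (p q : V) (A : G.Walk p q), IsShortCircuit G C A)
    (e e' : Sym2 V) (he : e ∈ C.edges) (he' : e' ∈ C.edges) (hne : e ≠ e')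
    (hv : ∃ v, v ∈ e ∧ v ∈ e') :
    ∃ (p q : V) (A : G.Walk p q), IsShortCircuit G C A ∧
      ∃ (b₁ b₂ : V) (C₁ : G.Walk b₁ b₁) (C₂ : G.Walk b₂ b₂),
        C₁.IsCycle ∧ C₂.IsCycle ∧
        C₁.length < C.length ∧ C₂.length < C.length ∧
        C₁.edges ⊆ C.edges ++ A.edges ∧ C₂.edges ⊆ C.edges ++ A.edges ∧
        (∀ f ∈ C.edges, f ∈ C₁.edges ∨ f ∈ C₂.edges) ∧
        ((e ∈ C₁.edges ∧ e' ∈ C₁.edges) ∨ (e ∈ C₂.edges ∧ e' ∈ C₂.edges) ∨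
          ((e ∈ C₁.edges ∧ e' ∈ C₂.edges) ∧
            ∃ f : Sym2 V, f ∈ C₁.edges ∧ f ∈ C₂.edges)) := by
  obtain ⟨p, q, A, hA⟩ := hnonmin
  obtain ⟨C₁, C₂, h1, h2, h3, h4, h5, h6, h7, f, hf1, hf2⟩ := aux15 G C hC A hA
  refine ⟨p, q, A, hA, ?_⟩
  rcases h7 e he with he1 | he2 <;> rcases h7 e' he' with he'1 | he'2
  · exact ⟨p, p, C₁, C₂, h1, h2, h3, h4, h5, h6, h7, Or.inl ⟨he1, he'1⟩⟩
  · exact ⟨p, p, C₁, C₂, h1, h2, h3, h4, h5, h6, h7,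
      Or.inr (Or.inr ⟨⟨he1, he'2⟩, f, hf1, hf2⟩)⟩
  · exact ⟨p, p, C₂, C₁, h2, h1, h4, h3, h6, h5, fun g hg => (h7 g hg).symm,
      Or.inr (Or.inr ⟨⟨he2, he'1⟩, f, hf2, hf1⟩)⟩
  · exact ⟨p, p, C₁, C₂, h1, h2, h3, h4, h5, h6, h7, Or.inr (Or.inl ⟨he2, he'2⟩)⟩
end
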